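/- arXiv:2107.06241 — 7 statements merged into one kernel-verified Lean document; each statement's English description precedes it below -/
import Mathlib

section
/- Let ℓ be an odd prime dividing q−1 and let Q be a nontrivial ℓ-subgroup of SL₂(F) with Q ≤ T. Then the normalizer of Q in SL₂(F) is equal to the subgroup generated by T and the matrix σ = [[0,−1],[1,0]]. -/
open Matrix
open scoped MatrixGroups

def diagonalTorus (F : Type*) [Field F] : Subgroup SL(2, F) where
  carrier := {g | (g : Matrix (Fin 2) (Fin 2) F) 0 1 = 0 ∧
    (g : Matrix (Fin 2) (Fin 2) F) 1 0 = 0}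
  one_mem' := by
    constructor <;> simp [Matrix.SpecialLinearGroup.coe_one, Matrix.one_apply]
  mul_mem' := by
    rintro a b ⟨ha1, ha2⟩ ⟨hb1, hb2⟩
    constructor <;>
    · simp only [Matrix.SpecialLinearGroup.coe_mul, Matrix.mul_apply, Fin.sum_univ_two]
      simp [ha1, ha2, hb1, hb2]
  inv_mem' := by
    rintro a ⟨h1, h2⟩
    constructor <;>
      simp [Matrix.SpecialLinearGroup.coe_inv, Matrix.adjugate_fin_two, h1, h2]

def sigmaSL (F : Type*) [Field F] : SL(2, F) :=
  ⟨!![0, -1; 1, 0], by norm_num [Matrix.det_fin_two_of]⟩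

section Aux
variable {F : Type*} [Field F]

lemma torus_comm {x y : SL(2,F)} (hx : x ∈ diagonalTorus F) (hy : y ∈ diagonalTorus F) :
    x * y = y * x := by
  obtain ⟨hx1, hx2⟩ := hx
  obtain ⟨hy1, hy2⟩ := hy
  ext i j
  fin_cases i <;> fin_cases j <;>
    simp [Matrix.SpecialLinearGroup.coe_mul, Matrix.mul_apply, Fin.sum_univ_two,
      hx1, hx2, hy1, hy2, mul_comm]

lemma sigma_conj {x : SL(2,F)} (hx : x ∈ diagonalTorus F) :
    sigmaSL F * x * (sigmaSL F)⁻¹ = x⁻¹ := by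
  obtain ⟨hx1, hx2⟩ := hx
  ext i j
  simp only [Matrix.SpecialLinearGroup.coe_mul, Matrix.SpecialLinearGroup.coe_inv]
  fin_cases i <;> fin_cases j <;>
    simp [sigmaSL, Matrix.SpecialLinearGroup.coe_mul, Matrix.SpecialLinearGroup.coe_inv,
      Matrix.adjugate_fin_two, Matrix.mul_apply, Matrix.vecMul, dotProduct,
      Fin.sum_univ_two, hx1, hx2]

lemma sigma_conj' {x : SL(2,F)} (hx : x ∈ diagonalTorus F) :
    (sigmaSL F)⁻¹ * x * sigmaSL F = x⁻¹ := by
  obtain ⟨hx1, hx2⟩ := hx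
  ext i j
  simp only [Matrix.SpecialLinearGroup.coe_mul, Matrix.SpecialLinearGroup.coe_inv]
  fin_cases i <;> fin_cases j <;>
    simp [sigmaSL, Matrix.SpecialLinearGroup.coe_mul, Matrix.SpecialLinearGroup.coe_inv,
      Matrix.adjugate_fin_two, Matrix.mul_apply, Matrix.vecMul, dotProduct,
      Fin.sum_univ_two, hx1, hx2]

end Aux

/-- If `ℓ` is an odd prime dividing `q - 1` and `Q` is a nontrivial `ℓ`-subgroup of
`SL(2, F)` contained in the split torus `T`, then `N_G(Q) = ⟨T, σ⟩`. -/
theorem normalizer_eq_of_isPGroup_le_torus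
    (F : Type*) [Field F] [Fintype F] (q ℓ : ℕ) (hq : Fintype.card F = q)
    (hq_odd : Odd q) (hℓ : ℓ.Prime) (hℓ_odd : Odd ℓ) (hdvd : ℓ ∣ q - 1)
    (Q : Subgroup SL(2, F)) (hQp : IsPGroup ℓ Q) (hQ_ne_bot : Q ≠ ⊥)
    (hQT : Q ≤ diagonalTorus F) :
    Subgroup.normalizer (Q : Set SL(2, F)) = Subgroup.closure ((diagonalTorus F : Set SL(2, F)) ∪ {sigmaSL F}) := by
  apply le_antisymm
  · -- normalizer ≤ closure
    intro g hg
    -- pick a nontrivial element of Q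
    obtain ⟨t, htQ, htne⟩ := Q.bot_or_exists_ne_one.resolve_left hQ_ne_bot
    obtain ⟨ht1, ht2⟩ := hQT htQ
    set a := (t : Matrix (Fin 2) (Fin 2) F) 0 0 with ha_def
    set a' := (t : Matrix (Fin 2) (Fin 2) F) 1 1 with ha'_def
    have hdet_t : a * a' = 1 := by
      have := t.prop
      rw [Matrix.det_fin_two] at this
      rw [ht1, ht2] at this; simpa using this
    have ha0 : a ≠ 0 := left_ne_zero_of_mul_eq_one hdet_t
    have ha'0 : a' ≠ 0 := right_ne_zero_of_mul_eq_one hdet_t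
    have haa' : a ≠ a' := by
      intro h
      have ha2 : a * a = 1 := by rw [h] at hdet_t ⊢; exact hdet_t
      have : a = 1 ∨ a = -1 := by
        rcases mul_self_eq_one_iff.mp ha2 with h1 | h1
        · exact Or.inl h1
        · exact Or.inr h1
      rcases this with h1 | h1
      · apply htne
        ext i j
        fin_cases i <;> fin_cases j <;>
          simp_all [Matrix.SpecialLinearGroup.coe_one, Matrix.one_apply]
      · -- a = -1, so t = -1 has order 2, contradicting ℓ odd
        have ht_sq : t * t = 1 := by
          ext i j
          fin_cases i <;> fin_cases j <;>
            · simp only [Matrix.SpecialLinearGroup.coe_mul, Matrix.mul_apply,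
                Fin.sum_univ_two, Matrix.SpecialLinearGroup.coe_one, Matrix.one_apply]
              simp_all
        have hord : orderOf t = 2 := by
          have : t ^ 2 = 1 := by rw [pow_two]; exact ht_sq
          exact orderOf_eq_prime this htne
        obtain ⟨k, hk⟩ := hQp ⟨t, htQ⟩
        have hk' : t ^ (ℓ ^ k) = 1 := by
          have := congrArg (Subtype.val) hk
          simpa using this
        have h2 : (2 : ℕ) ∣ ℓ ^ k := hord ▸ orderOf_dvd_of_pow_eq_one hk'
        have : (2 : ℕ) ∣ ℓ := Nat.Prime.dvd_of_dvd_pow Nat.prime_two h2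
        rw [Nat.odd_iff] at hℓ_odd
        omega
    -- conjugate of t lies in Q ⊆ T
    have hgt : g * t * g⁻¹ ∈ Q := (Subgroup.mem_normalizer_iff.mp hg t).mp htQ
    obtain ⟨y, hy⟩ : ∃ y : SL(2,F), y = g * t * g⁻¹ := ⟨_, rfl⟩
    have hyQ : y ∈ Q := hy ▸ hgt
    obtain ⟨hy1, hy2⟩ := hQT hyQ
    set b := (y : Matrix (Fin 2) (Fin 2) F) 0 0 with hb_def
    set c := (y : Matrix (Fin 2) (Fin 2) F) 1 1 with hc_def
    have hdet_y : b * c = 1 := by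
      have := y.prop
      rw [Matrix.det_fin_two] at this
      rw [hy1, hy2] at this; simpa using this
    have key : ((g * t : SL(2,F)) : Matrix (Fin 2) (Fin 2) F) =
        ((y * g : SL(2,F)) : Matrix (Fin 2) (Fin 2) F) := by
      congr 1
      rw [hy, inv_mul_cancel_right]
    have e00 : (g : Matrix (Fin 2) (Fin 2) F) 0 0 * a = b * (g : Matrix (Fin 2) (Fin 2) F) 0 0 := by
      have := congrFun (congrFun key 0) 0
      simp only [Matrix.SpecialLinearGroup.coe_mul, Matrix.mul_apply, Fin.sum_univ_two] at this
      rw [ht2, hy1] at this; simpa using this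
    have e01 : (g : Matrix (Fin 2) (Fin 2) F) 0 1 * a' = b * (g : Matrix (Fin 2) (Fin 2) F) 0 1 := by
      have := congrFun (congrFun key 0) 1
      simp only [Matrix.SpecialLinearGroup.coe_mul, Matrix.mul_apply, Fin.sum_univ_two] at this
      rw [ht1, hy1] at this; simpa using this
    have e10 : (g : Matrix (Fin 2) (Fin 2) F) 1 0 * a = c * (g : Matrix (Fin 2) (Fin 2) F) 1 0 := by
      have := congrFun (congrFun key 1) 0
      simp only [Matrix.SpecialLinearGroup.coe_mul, Matrix.mul_apply, Fin.sum_univ_two] at this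
      rw [ht2, hy2] at this; simpa using this
    have e11 : (g : Matrix (Fin 2) (Fin 2) F) 1 1 * a' = c * (g : Matrix (Fin 2) (Fin 2) F) 1 1 := by
      have := congrFun (congrFun key 1) 1
      simp only [Matrix.SpecialLinearGroup.coe_mul, Matrix.mul_apply, Fin.sum_univ_two] at this
      rw [ht1, hy2] at this; simpa using this
    have hdet_g : (g : Matrix (Fin 2) (Fin 2) F) 0 0 * (g : Matrix (Fin 2) (Fin 2) F) 1 1 -
        (g : Matrix (Fin 2) (Fin 2) F) 0 1 * (g : Matrix (Fin 2) (Fin 2) F) 1 0 = 1 := by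
      have := g.prop
      rwa [Matrix.det_fin_two] at this
    by_cases hb : b = a
    · -- g is diagonal
      have hc : c = a' := by
        have : a * c = 1 := hb ▸ hdet_y
        field_simp at this hdet_t
        exact mul_left_cancel₀ ha0 (this.trans hdet_t.symm)
      have hg01 : (g : Matrix (Fin 2) (Fin 2) F) 0 1 = 0 := by
        have : (g : Matrix (Fin 2) (Fin 2) F) 0 1 * (a' - a) = 0 := by
          rw [hb] at e01; ring_nf; linear_combination e01
        rcases mul_eq_zero.mp this with h | h
        · exact h
        · exact absurd (sub_eq_zero.mp h).symm haa'
      have hg10 : (g : Matrix (Fin 2) (Fin 2) F) 1 0 = 0 := by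
        have : (g : Matrix (Fin 2) (Fin 2) F) 1 0 * (a - a') = 0 := by
          rw [hc] at e10; linear_combination e10
        rcases mul_eq_zero.mp this with h | h
        · exact h
        · exact absurd (sub_eq_zero.mp h) haa'
      exact Subgroup.subset_closure (Or.inl ⟨hg01, hg10⟩)
    · -- g is antidiagonal
      have hg00 : (g : Matrix (Fin 2) (Fin 2) F) 0 0 = 0 := by
        have : (g : Matrix (Fin 2) (Fin 2) F) 0 0 * (a - b) = 0 := by
          linear_combination e00
        rcases mul_eq_zero.mp this with h | h
        · exact h
        · exact absurd (sub_eq_zero.mp h).symm hb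
      have hdet' : -((g : Matrix (Fin 2) (Fin 2) F) 0 1 * (g : Matrix (Fin 2) (Fin 2) F) 1 0) = 1 := by
        rw [hg00] at hdet_g; linear_combination hdet_g
      have hg01ne : (g : Matrix (Fin 2) (Fin 2) F) 0 1 ≠ 0 := by
        intro h; rw [h] at hdet'; simp at hdet'
      have hba' : b = a' := by
        have := mul_right_cancel₀ hg01ne (by linear_combination e01 :
          a' * (g : Matrix (Fin 2) (Fin 2) F) 0 1 = b * (g : Matrix (Fin 2) (Fin 2) F) 0 1)
        exact this.symm
      have hca : c = a := by
        have : a' * c = 1 := hba' ▸ hdet_y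
        have h2 : a' * a = 1 := by linear_combination hdet_t
        exact mul_left_cancel₀ ha'0 (this.trans h2.symm)
      have hg11 : (g : Matrix (Fin 2) (Fin 2) F) 1 1 = 0 := by
        have : (g : Matrix (Fin 2) (Fin 2) F) 1 1 * (a' - a) = 0 := by
          rw [hca] at e11; linear_combination e11
        rcases mul_eq_zero.mp this with h | h
        · exact h
        · exact absurd (sub_eq_zero.mp h).symm haa'
      -- g = d * σ  with  d = diag(-g01, g10)
      have hdetd : Matrix.det !![-(g : Matrix (Fin 2) (Fin 2) F) 0 1, 0; 0,
          (g : Matrix (Fin 2) (Fin 2) F) 1 0] = 1 := by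
        rw [Matrix.det_fin_two_of]; linear_combination hdet'
      set d : SL(2,F) := ⟨_, hdetd⟩ with hd_def
      have hdT : d ∈ diagonalTorus F := by
        constructor <;> simp [hd_def]
      have hgd : g = d * sigmaSL F := by
        ext i j
        simp only [Matrix.SpecialLinearGroup.coe_mul]
        fin_cases i <;> fin_cases j <;>
          simp [hd_def, sigmaSL, Matrix.SpecialLinearGroup.coe_mul, Matrix.mul_apply,
            Fin.sum_univ_two, hg00, hg11]
      rw [hgd]
      exact Subgroup.mul_mem _ (Subgroup.subset_closure (Or.inl hdT))
        (Subgroup.subset_closure (Or.inr rfl))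
  · -- closure ≤ normalizer
    rw [Subgroup.closure_le]
    rintro x (hx | hx)
    · -- x in the torus
      rw [SetLike.mem_coe, Subgroup.mem_normalizer_iff]
      intro h
      constructor
      · intro hh
        have : x * h = h * x := torus_comm hx (hQT hh)
        rw [this, mul_assoc, mul_inv_cancel, mul_one]
        exact hh
      · intro hh
        have hy : x * h * x⁻¹ ∈ diagonalTorus F := hQT hh
        have : x⁻¹ * (x * h * x⁻¹) = (x * h * x⁻¹) * x⁻¹ :=
          torus_comm ((diagonalTorus F).inv_mem hx) hy
        have hh' : h = x⁻¹ * (x * h * x⁻¹) * x := by group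
        rw [hh', this]
        have : x * h * x⁻¹ * x⁻¹ * x = x * h * x⁻¹ := by group
        rw [this]
        exact hh
    · -- x = σ
      simp only [Set.mem_singleton_iff] at hx
      subst hx
      rw [SetLike.mem_coe, Subgroup.mem_normalizer_iff]
      intro h
      constructor
      · intro hh
        rw [sigma_conj (hQT hh)]
        exact Q.inv_mem hh
      · intro hh
        have : (sigmaSL F)⁻¹ * (sigmaSL F * h * (sigmaSL F)⁻¹) * sigmaSL F =
            (sigmaSL F * h * (sigmaSL F)⁻¹)⁻¹ := sigma_conj' (hQT hh)
        have h2 : (sigmaSL F)⁻¹ * (sigmaSL F * h * (sigmaSL F)⁻¹) * sigmaSL F = h := by group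
        rw [h2] at this
        rw [this]
        exact Q.inv_mem hh
end

section
/- Let ℓ be an odd prime dividing q−1. Then there exists a Sylow ℓ-subgroup of SL₂(F) contained in the diagonal torus T, and every Sylow ℓ-subgroup of SL₂(F) is cyclic. -/
open Matrix
open scoped MatrixGroups

/-- The map `a ↦ diag(a, a⁻¹)` as a monoid hom `Fˣ →* SL(2, F)`. -/
def torusHom (F : Type*) [Field F] : Fˣ →* SL(2, F) where
  toFun a := ⟨Matrix.diagonal ![(a : F), ((a⁻¹ : Fˣ) : F)], by
    simp [Matrix.det_diagonal, Fin.prod_univ_two]⟩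
  map_one' := by
    ext i j
    fin_cases i <;> fin_cases j <;>
      simp [Matrix.diagonal, Matrix.one_apply]
  map_mul' a b := by
    ext i j
    change _ = ((Matrix.diagonal _ * Matrix.diagonal _ : Matrix (Fin 2) (Fin 2) F)) i j
    fin_cases i <;> fin_cases j <;>
      simp [Matrix.diagonal, Matrix.mul_apply, Fin.sum_univ_two, mul_comm]

theorem coe_torusHom (F : Type*) [Field F] (a : Fˣ) :
    ((torusHom F a : SL(2,F)) : Matrix (Fin 2) (Fin 2) F) = Matrix.diagonal ![(a : F), ((a⁻¹ : Fˣ) : F)] := rfl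

theorem torusHom_injective (F : Type*) [Field F] : Function.Injective (torusHom F) := by
  intro a b hab
  have : ((torusHom F a : SL(2,F)) : Matrix (Fin 2) (Fin 2) F) 0 0 =
      ((torusHom F b : SL(2,F)) : Matrix (Fin 2) (Fin 2) F) 0 0 := by rw [hab]
  simpa [coe_torusHom, Matrix.diagonal, Units.ext_iff] using this

theorem torusHom_range (F : Type*) [Field F] : (torusHom F).range = diagonalTorus F := by
  ext g
  constructor
  · rintro ⟨a, rfl⟩
    constructor <;> simp [coe_torusHom, Matrix.diagonal]
  · rintro ⟨h1, h2⟩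
    have hdet : (g : Matrix (Fin 2) (Fin 2) F).det = 1 := g.2
    rw [Matrix.det_fin_two, h1, h2] at hdet
    simp only [mul_zero, sub_zero] at hdet
    refine ⟨⟨(g : Matrix (Fin 2) (Fin 2) F) 0 0, (g : Matrix (Fin 2) (Fin 2) F) 1 1,
      hdet, by rw [mul_comm]; exact hdet⟩, ?_⟩
    ext i j
    fin_cases i <;> fin_cases j <;>
      simp [coe_torusHom, Matrix.diagonal, h1, h2, inv_eq_of_mul_eq_one_right hdet]

/-- The torus is isomorphic to `Fˣ`. -/
noncomputable def torusEquiv (F : Type*) [Field F] : Fˣ ≃* diagonalTorus F :=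
  (MonoidHom.ofInjective (torusHom_injective F)).trans
    (MulEquiv.subgroupCongr (torusHom_range F))

theorem card_torus (F : Type*) [Field F] [Fintype F] :
    Nat.card (diagonalTorus F) = Fintype.card F - 1 := by
  rw [← Nat.card_congr (torusEquiv F).toEquiv, Nat.card_units, Nat.card_eq_fintype_card]

theorem toGL_range_eq_ker (F : Type*) [Field F] :
    (Matrix.SpecialLinearGroup.toGL (n := Fin 2) (R := F)).range =
      (Matrix.GeneralLinearGroup.det (n := Fin 2) (R := F)).ker := by
  ext g
  simp only [MonoidHom.mem_range, MonoidHom.mem_ker]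
  constructor
  · rintro ⟨s, rfl⟩
    exact Matrix.SpecialLinearGroup.coeToGL_det s
  · intro h
    have hdet : ((g : Matrix (Fin 2) (Fin 2) F)).det = 1 := by
      have := congrArg Units.val h
      simpa using this
    exact ⟨⟨(g : Matrix (Fin 2) (Fin 2) F), hdet⟩, Units.ext rfl⟩

theorem toGL_injective (F : Type*) [Field F] :
    Function.Injective (Matrix.SpecialLinearGroup.toGL (n := Fin 2) (R := F)) := by
  intro a b hab
  exact Subtype.ext (congrArg Units.val hab)

theorem det_surjective (F : Type*) [Field F] :
    Function.Surjective (Matrix.GeneralLinearGroup.det (n := Fin 2) (R := F)) := by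
  intro u
  refine ⟨⟨Matrix.diagonal ![(u : F), 1], Matrix.diagonal ![((u⁻¹ : Fˣ) : F), 1], ?_, ?_⟩, ?_⟩
  · rw [Matrix.diagonal_mul_diagonal]
    convert Matrix.diagonal_one using 2
    funext i
    fin_cases i <;> simp
  · rw [Matrix.diagonal_mul_diagonal]
    convert Matrix.diagonal_one using 2
    funext i
    fin_cases i <;> simp
  · apply Units.ext
    simp [Matrix.det_diagonal, Fin.prod_univ_two]

theorem card_SL2 (F : Type*) [Field F] [Fintype F] :
    Nat.card SL(2, F) * (Fintype.card F - 1) =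
      (Fintype.card F ^ 2 - 1) * (Fintype.card F ^ 2 - Fintype.card F) := by
  have e1 : SL(2, F) ≃* (Matrix.GeneralLinearGroup.det (n := Fin 2) (R := F)).ker :=
    (MonoidHom.ofInjective (toGL_injective F)).trans
      (MulEquiv.subgroupCongr (toGL_range_eq_ker F))
  have e2 := QuotientGroup.quotientKerEquivOfSurjective _ (det_surjective F)
  have h := Subgroup.card_eq_card_quotient_mul_card_subgroup
    (Matrix.GeneralLinearGroup.det (n := Fin 2) (R := F)).ker
  have hu : Nat.card Fˣ = Fintype.card F - 1 := by
    rw [Nat.card_units, Nat.card_eq_fintype_card]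
  rw [Nat.card_congr e2.toEquiv, ← Nat.card_congr e1.toEquiv, hu,
    Matrix.card_GL_field, Fin.prod_univ_two] at h
  norm_num at h
  rw [mul_comm]
  exact h.symm

/-- If `ℓ` is an odd prime dividing `q - 1`, then some Sylow `ℓ`-subgroup of `SL(2, F)`
is contained in the split torus `T`, and every Sylow `ℓ`-subgroup of `SL(2, F)` is cyclic. -/
theorem sylow_le_torus_and_cyclic_of_dvd_sub_one
    (F : Type*) [Field F] [Fintype F] (q ℓ : ℕ) (hq : Fintype.card F = q)
    (hq_odd : Odd q) (hℓ : ℓ.Prime) (hℓ_odd : Odd ℓ) (hdvd : ℓ ∣ q - 1) :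
    (∃ P : Sylow ℓ SL(2, F), (P : Subgroup SL(2, F)) ≤ diagonalTorus F) ∧
      (∀ P : Sylow ℓ SL(2, F), IsCyclic (P : Subgroup SL(2, F))) := by
  haveI : Fact ℓ.Prime := ⟨hℓ⟩
  have hq2 : 2 ≤ q := hq ▸ Fintype.one_lt_card
  have hcard : Nat.card SL(2, F) * (q - 1) = (q ^ 2 - 1) * (q ^ 2 - q) := by
    rw [← hq]; exact card_SL2 F
  have hG : Nat.card SL(2, F) = q * (q + 1) * (q - 1) := by
    have hpos : 0 < q - 1 := by omega
    have key : (q * (q + 1) * (q - 1)) * (q - 1) = (q ^ 2 - 1) * (q ^ 2 - q) := by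
      have h1 : 1 ≤ q := by omega
      have h2 : 1 ≤ q ^ 2 := by nlinarith
      have h3 : q ≤ q ^ 2 := by nlinarith
      zify [h1, h2, h3]
      ring
    exact Nat.eq_of_mul_eq_mul_right hpos (by rw [hcard, ← key])
  have hℓq : ¬ ℓ ∣ q := by
    intro h
    have h1 : q - (q - 1) = 1 := by omega
    have : ℓ ∣ 1 := h1 ▸ Nat.dvd_sub h hdvd
    exact Nat.Prime.one_lt hℓ |>.ne' (Nat.dvd_one.mp this)
  have hℓq1 : ¬ ℓ ∣ (q + 1) := by
    intro h
    have h1 : (q + 1) - (q - 1) = 2 := by omega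
    have h2 : ℓ ∣ 2 := h1 ▸ Nat.dvd_sub h hdvd
    have := Nat.le_of_dvd (by norm_num) h2
    have := hℓ.two_le
    have : ℓ = 2 := by omega
    rw [this, Nat.odd_iff] at hℓ_odd
    omega
  have hfac : (Nat.card SL(2, F)).factorization ℓ = (q - 1).factorization ℓ := by
    rw [hG, Nat.factorization_mul (Nat.mul_ne_zero (by omega) (by omega)) (by omega),
      Nat.factorization_mul (by omega) (by omega)]
    simp [Nat.factorization_eq_zero_of_not_dvd hℓq, Nat.factorization_eq_zero_of_not_dvd hℓq1]
  haveI : IsCyclic (diagonalTorus F) := isCyclic_of_surjective _ (torusEquiv F).surjective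
  obtain ⟨Q⟩ : Nonempty (Sylow ℓ (diagonalTorus F)) := inferInstance
  have hQ : Nat.card Q = ℓ ^ (Nat.card (diagonalTorus F)).factorization ℓ :=
    Q.card_eq_multiplicity
  have hTcard : Nat.card (diagonalTorus F) = q - 1 := by rw [card_torus, hq]
  have hinj := Subgroup.subtype_injective (diagonalTorus F)
  have hP₀card : Nat.card (Subgroup.map (diagonalTorus F).subtype Q) =
      ℓ ^ (Nat.card SL(2, F)).factorization ℓ := by
    rw [show Nat.card (Subgroup.map (diagonalTorus F).subtype (Q : Subgroup (diagonalTorus F)))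
        = Nat.card Q from
      (Nat.card_congr (Subgroup.equivMapOfInjective _ _ hinj).toEquiv).symm, hQ, hTcard, hfac]
  haveI : IsCyclic (Subgroup.map (diagonalTorus F).subtype (Q : Subgroup (diagonalTorus F))) :=
    isCyclic_of_surjective _ (Subgroup.equivMapOfInjective _ _ hinj).surjective
  haveI hcy : IsCyclic ((Sylow.ofCard _ hP₀card : Sylow ℓ SL(2, F)) : Subgroup SL(2, F)) := by
    rw [Sylow.coe_ofCard]
    infer_instance
  refine ⟨⟨Sylow.ofCard _ hP₀card, ?_⟩, ?_⟩
  · rw [Sylow.coe_ofCard]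
    exact Subgroup.map_subtype_le _
  · intro P
    exact isCyclic_of_surjective _ (Sylow.equiv P (Sylow.ofCard _ hP₀card)).symm.surjective
end

section
/- Let ℓ be an odd prime dividing q+1. Then every Sylow ℓ-subgroup of SL₂(F) is cyclic, of order equal to the ℓ-part of q+1 (the largest power of ℓ dividing q+1). -/
open Matrix
open scoped MatrixGroups

open Polynomial Pointwise

/-- Existence of an element of order `N` in `SL(2,F)` when `N ∣ q+1` and `N` is
coprime to `q-1`. -/
lemma exists_SL2_elem_orderOf_eq (F : Type*) [Field F] [Fintype F] {q N : ℕ}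
    (hq : Fintype.card F = q) (hq_odd : Odd q) (hN : N ∣ q + 1)
    (hcop : Nat.Coprime N (q - 1)) : ∃ g : SL(2, F), orderOf g = N := by
  have hq2 : 2 ≤ q := hq ▸ Fintype.one_lt_card
  have hN0 : N ≠ 0 := by rintro rfl; exact (Nat.succ_ne_zero q) (Nat.eq_zero_of_zero_dvd hN)
  -- char F ≠ 2
  have hchar : ringChar F ≠ 2 := by
    intro h2
    haveI : CharP F 2 := h2 ▸ ringChar.charP F
    obtain ⟨n, -, hcard⟩ := FiniteField.card F 2
    rw [hq] at hcard
    obtain ⟨k, hk⟩ := hq_odd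
    have : (2:ℕ) ∣ q := hcard ▸ dvd_pow_self 2 n.pos.ne'
    omega
  obtain ⟨a, ha⟩ := FiniteField.exists_nonsquare hchar
  have hirr : Irreducible (X ^ 2 - C a) := by
    refine X_pow_sub_C_irreducible_of_prime Nat.prime_two fun b hb => ha ⟨b, ?_⟩
    rw [← hb, sq]
  haveI := Fact.mk hirr
  set f : F[X] := X ^ 2 - C a with hf
  have hf0 : f ≠ 0 := hirr.ne_zero
  set K := AdjoinRoot f
  let pb : PowerBasis F K := AdjoinRoot.powerBasis hf0
  have hdim : pb.dim = 2 := by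
    simp [pb, AdjoinRoot.powerBasis, hf, natDegree_X_pow_sub_C]
  let b : Module.Basis (Fin 2) F K := pb.basis.reindex (finCongr hdim)
  letI : Fintype K := Module.fintypeOfFintype b
  have hK : Fintype.card K = q ^ 2 := by
    rw [Module.card_fintype b, hq, Fintype.card_fin]
  have hKu : Nat.card Kˣ = q ^ 2 - 1 := by
    rw [Nat.card_eq_fintype_card, Fintype.card_units, hK]
  -- element of Kˣ of order N
  obtain ⟨u, hu⟩ := IsCyclic.exists_ofOrder_eq_natCard (α := Kˣ)
  have hNq2 : N ∣ q ^ 2 - 1 := by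
    refine hN.trans (Dvd.intro (q - 1) ?_)
    have := Nat.sq_sub_sq q 1
    simpa [one_pow] using this.symm
  have huN : N ∣ orderOf u := by rw [hu, hKu]; exact hNq2
  have hu0 : orderOf u ≠ 0 := by
    have h1 : 1 < q ^ 2 := Nat.one_lt_pow two_ne_zero (by omega)
    rw [hu, hKu]; omega
  set x : Kˣ := u ^ (orderOf u / N) with hx
  have hxord : orderOf x = N := orderOf_pow_orderOf_div hu0 huN
  -- the algebra map to matrices
  set A := Algebra.leftMulMatrix b with hA
  have hAinj : Function.Injective A := Algebra.leftMulMatrix_injective b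
  -- determinant of A y is 1 whenever y ^ N = 1
  have hdet : ∀ y : Kˣ, (y : K) ^ N = 1 → (A (y : K)).det = 1 := by
    intro y hy
    set d := (A (y : K)).det with hd
    have hdN : d ^ N = 1 := by
      rw [hd, ← det_pow, ← _root_.map_pow, hy, _root_.map_one, det_one]
    have hd0 : d ≠ 0 := by
      have : d * (A ((y⁻¹ : Kˣ) : K)).det = 1 := by
        rw [hd, ← det_mul, ← _root_.map_mul]
        norm_num
      exact left_ne_zero_of_mul_eq_one this
    have hdq : d ^ (q - 1) = 1 := by
      rw [← hq]; exact FiniteField.pow_card_sub_one_eq_one d hd0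
    have h1 : orderOf d ∣ N := orderOf_dvd_of_pow_eq_one hdN
    have h2 : orderOf d ∣ q - 1 := orderOf_dvd_of_pow_eq_one hdq
    have : orderOf d ∣ 1 := hcop ▸ Nat.dvd_gcd h1 h2
    rw [Nat.dvd_one] at this
    exact orderOf_eq_one_iff.mp this
  have hxN : (x : K) ^ N = 1 := by
    rw [← Units.val_pow_eq_pow_val, ← hxord, pow_orderOf_eq_one, Units.val_one]
  set g : SL(2,F) := ⟨A (x : K), hdet x hxN⟩ with hg
  have hgcoe : (g : Matrix (Fin 2) (Fin 2) F) = A (x : K) := rfl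
  have hgN : g ^ N = 1 := by
    apply Subtype.ext
    rw [Matrix.SpecialLinearGroup.coe_pow, hgcoe, ← _root_.map_pow, hxN, _root_.map_one]
    rfl
  refine ⟨g, Nat.dvd_antisymm (orderOf_dvd_of_pow_eq_one hgN) ?_⟩
  rw [← hxord]
  have h1 : g ^ orderOf g = 1 := pow_orderOf_eq_one g
  have hmat : A ((x : K) ^ orderOf g) = A 1 := by
    rw [_root_.map_pow, _root_.map_one, ← hgcoe, ← Matrix.SpecialLinearGroup.coe_pow, h1]
    rfl
  have h2 : (x : K) ^ orderOf g = 1 := hAinj hmat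
  have h3 : x ^ orderOf g = 1 := by
    ext
    rw [Units.val_pow_eq_pow_val, h2, Units.val_one]
  exact orderOf_dvd_of_pow_eq_one h3


/-- If `ℓ` is an odd prime dividing `q + 1`, then every Sylow `ℓ`-subgroup of `SL(2, F)`
is cyclic of order the `ℓ`-part of `q + 1`. -/
theorem sylow_cyclic_of_dvd_add_one
    (F : Type*) [Field F] [Fintype F] (q ℓ : ℕ) (hq : Fintype.card F = q)
    (hq_odd : Odd q) (hℓ : ℓ.Prime) (hℓ_odd : Odd ℓ) (hdvd : ℓ ∣ q + 1) :
    ∀ P : Sylow ℓ SL(2, F), IsCyclic (P : Subgroup SL(2, F)) ∧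
      Nat.card (P : Subgroup SL(2, F)) = ℓ ^ ((q + 1).factorization ℓ) := by
  haveI : Fact ℓ.Prime := ⟨hℓ⟩
  have hq2 : 2 ≤ q := hq ▸ Fintype.one_lt_card
  have hq3 : 3 ≤ q := by obtain ⟨k, hk⟩ := hq_odd; omega
  have hℓ2 : 2 < ℓ := by
    have := hℓ.two_le
    obtain ⟨k, hk⟩ := hℓ_odd
    omega
  have hℓq : ¬ ℓ ∣ q := by
    intro h
    have : ℓ ∣ 1 := by simpa [Nat.add_sub_cancel_left] using Nat.dvd_sub hdvd h
    simp [Nat.dvd_one] at this; omega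
  have hℓq1 : ¬ ℓ ∣ (q - 1) := by
    intro h
    have h2 : ℓ ∣ 2 := by
      have := Nat.dvd_sub hdvd h
      have he : q + 1 - (q - 1) = 2 := by omega
      rwa [he] at this
    have := Nat.le_of_dvd (by norm_num) h2
    omega
  set n := (q + 1).factorization ℓ with hn
  have hcop : Nat.Coprime (ℓ ^ n) (q - 1) :=
    Nat.Coprime.pow_left _ (hℓ.coprime_iff_not_dvd.mpr hℓq1)
  have hNdvd : ℓ ^ n ∣ q + 1 := Nat.ordProj_dvd (q + 1) ℓ
  obtain ⟨g, hg⟩ := exists_SL2_elem_orderOf_eq F hq hq_odd hNdvd hcop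
  set H : Subgroup SL(2, F) := Subgroup.zpowers g with hH
  have hcardH : Nat.card H = ℓ ^ n := by rw [hH, Nat.card_zpowers, hg]
  have hHp : IsPGroup ℓ H := IsPGroup.of_card hcardH
  have hHcyc : IsCyclic H := by
    refine ⟨⟨⟨g, Subgroup.mem_zpowers g⟩, ?_⟩⟩
    rintro ⟨x, hx⟩
    obtain ⟨k, hk⟩ := hx
    exact ⟨k, Subtype.ext (by push_cast; exact hk)⟩
  have hG0 : Nat.card SL(2, F) ≠ 0 := Nat.card_pos.ne'
  have hfact : (Nat.card SL(2, F)).factorization ℓ = n := by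
    have hdvdGL : Nat.card SL(2, F) ∣ Nat.card (GL (Fin 2) F) := by
      apply Subgroup.card_dvd_of_injective (Matrix.SpecialLinearGroup.toGL)
      intro s t h
      exact Subtype.ext (congrArg Units.val h)
    have hGL : Nat.card (GL (Fin 2) F) = ((q + 1) * (q - 1)) * (q * (q - 1)) := by
      rw [Matrix.card_GL_field, hq, Fin.prod_univ_two]
      simp only [Fin.val_zero, Fin.val_one, pow_zero, pow_one]
      have h1 : q ^ 2 - 1 = (q + 1) * (q - 1) := by
        have := Nat.sq_sub_sq q 1
        simpa [one_pow] using this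
      have h2 : q ^ 2 - q = q * (q - 1) := by
        rw [pow_two, ← Nat.mul_pred]
        rfl
      rw [h1, h2]
    have hq1 : q - 1 ≠ 0 := by omega
    have hub : (Nat.card SL(2, F)).factorization ℓ ≤ n := by
      rw [hGL] at hdvdGL
      have hM0 : ((q + 1) * (q - 1)) * (q * (q - 1)) ≠ 0 :=
        Nat.mul_ne_zero (Nat.mul_ne_zero (by omega) hq1) (Nat.mul_ne_zero (by omega) hq1)
      have hle := (Nat.factorization_le_iff_dvd hG0 hM0).mpr hdvdGL
      have hl := hle ℓ
      rw [Nat.factorization_mul (Nat.mul_ne_zero (by omega) hq1) (Nat.mul_ne_zero (by omega) hq1),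
        Nat.factorization_mul (by omega) hq1,
        Nat.factorization_mul (by omega) hq1,
        Finsupp.add_apply, Finsupp.add_apply, Finsupp.add_apply,
        Nat.factorization_eq_zero_of_not_dvd hℓq1,
        Nat.factorization_eq_zero_of_not_dvd hℓq] at hl
      omega
    have hlb : n ≤ (Nat.card SL(2, F)).factorization ℓ := by
      rw [← hℓ.pow_dvd_iff_le_factorization hG0, ← hcardH]
      exact H.card_subgroup_dvd_card
    omega
  intro P
  have hcardP : Nat.card (P : Subgroup SL(2, F)) = ℓ ^ n := by
    rw [Sylow.card_eq_multiplicity, hfact]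
  refine ⟨?_, hcardP⟩
  obtain ⟨Q, hQ⟩ := hHp.exists_le_sylow
  have hcardQ : Nat.card (Q : Subgroup SL(2, F)) = ℓ ^ n := by
    rw [Sylow.card_eq_multiplicity, hfact]
  have hHQ : H = (Q : Subgroup SL(2, F)) :=
    Subgroup.eq_of_le_of_card_ge hQ (by rw [hcardH, hcardQ])
  haveI hQcyc : IsCyclic (Q : Subgroup SL(2, F)) := hHQ ▸ hHcyc
  obtain ⟨x, hx⟩ := MulAction.exists_smul_eq SL(2, F) Q P
  have hPQ : (P : Subgroup SL(2, F)) = MulAut.conj x • (Q : Subgroup SL(2, F)) := by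
    rw [← hx, Sylow.coe_subgroup_smul]
  rw [hPQ]
  exact isCyclic_of_surjective _
    (Subgroup.equivSMul (MulAut.conj x) (Q : Subgroup SL(2, F))).surjective
end

section
/- Let ℓ be an odd prime dividing q−1 and let Q be any nontrivial ℓ-subgroup of SL₂(F). Then the centralizer of Q in SL₂(F) is cyclic of order q−1, and the normalizer of Q in SL₂(F) has cardinality 2(q−1). -/
open Matrix
open scoped MatrixGroups

namespace SL2Aux
variable {F : Type*} [Field F]

lemma mul_entry (A B : SL(2,F)) (i j : Fin 2) :
    (A * B).1 i j = A.1 i 0 * B.1 0 j + A.1 i 1 * B.1 1 j := by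
  simp [Matrix.mul_apply, Fin.sum_univ_two]

lemma det_entry (A : SL(2,F)) : A.1 0 0 * A.1 1 1 - A.1 0 1 * A.1 1 0 = 1 := by
  have := A.2
  rwa [Matrix.det_fin_two] at this

lemma inv00 (A : SL(2,F)) : (A⁻¹).1 0 0 = A.1 1 1 := by rw [Matrix.SpecialLinearGroup.SL2_inv_expl]; rfl
lemma inv01 (A : SL(2,F)) : (A⁻¹).1 0 1 = -A.1 0 1 := by rw [Matrix.SpecialLinearGroup.SL2_inv_expl]; rfl
lemma inv10 (A : SL(2,F)) : (A⁻¹).1 1 0 = -A.1 1 0 := by rw [Matrix.SpecialLinearGroup.SL2_inv_expl]; rfl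
lemma inv11 (A : SL(2,F)) : (A⁻¹).1 1 1 = A.1 0 0 := by rw [Matrix.SpecialLinearGroup.SL2_inv_expl]; rfl

/-- The diagonal torus in `SL(2,F)`. -/
def T (F : Type*) [Field F] : Subgroup SL(2,F) where
  carrier := {A | A.1 0 1 = 0 ∧ A.1 1 0 = 0}
  one_mem' := by constructor <;> simp
  mul_mem' := by
    rintro A B ⟨hA1, hA2⟩ ⟨hB1, hB2⟩
    constructor <;> rw [mul_entry] <;> simp [hA1, hA2, hB1, hB2]
  inv_mem' := by
    rintro A ⟨h1, h2⟩
    exact ⟨by rw [inv01, h1, neg_zero], by rw [inv10, h2, neg_zero]⟩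

lemma mem_T_iff {A : SL(2,F)} : A ∈ T F ↔ A.1 0 1 = 0 ∧ A.1 1 0 = 0 := Iff.rfl

lemma diag_mul_entry {A : SL(2,F)} (hA : A ∈ T F) (B : SL(2,F)) (i j : Fin 2) :
    (A * B).1 i j = A.1 i i * B.1 i j := by
  fin_cases i <;> rw [mul_entry] <;> simp [hA.1, hA.2]

lemma mul_diag_entry {B : SL(2,F)} (hB : B ∈ T F) (A : SL(2,F)) (i j : Fin 2) :
    (A * B).1 i j = A.1 i j * B.1 j j := by
  fin_cases j <;> rw [mul_entry] <;> simp [hB.1, hB.2]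

lemma T_det {A : SL(2,F)} (hA : A ∈ T F) : A.1 0 0 * A.1 1 1 = 1 := by
  have := det_entry A
  rw [hA.1] at this
  linear_combination this

lemma T_ext {A B : SL(2,F)} (hA : A ∈ T F) (hB : B ∈ T F)
    (h : A.1 0 0 = B.1 0 0) : A = B := by
  have hAd := T_det hA
  have hBd := T_det hB
  have h00 : A.1 0 0 ≠ 0 := by
    intro h0; rw [h0, zero_mul] at hAd; exact zero_ne_one hAd
  have h11 : A.1 1 1 = B.1 1 1 := by
    rw [h] at hAd h00
    exact mul_left_cancel₀ h00 (hAd.trans hBd.symm)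
  ext i j
  fin_cases i <;> fin_cases j
  · exact h
  · exact hA.1.trans hB.1.symm
  · exact hA.2.trans hB.2.symm
  · exact h11

/-- The torus is isomorphic to `Fˣ`. -/
noncomputable def TEquiv : T F ≃* Fˣ where
  toFun A := Units.mk (A.1.1 0 0) (A.1.1 1 1) (T_det A.2) (by rw [mul_comm]; exact T_det A.2)
  invFun a := ⟨⟨!![(a:F), 0; 0, ((a⁻¹ : Fˣ):F)], by
      rw [Matrix.det_fin_two_of]; simp⟩, by constructor <;> simp⟩
  left_inv A := by
    apply Subtype.ext
    refine T_ext ?_ A.2 ?_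
    · constructor <;> simp
    · simp
  right_inv a := by
    ext
    simp
  map_mul' A B := by
    ext
    simp only [Units.val_mk, Units.val_mul]
    exact mul_diag_entry B.2 _ 0 0

lemma isCyclic_T [Finite F] : IsCyclic (T F) := by
  exact isCyclic_of_surjective (TEquiv (F := F)).symm.toMonoidHom
    (TEquiv (F := F)).symm.surjective

lemma card_T [Fintype F] : Nat.card (T F) = Fintype.card F - 1 := by
  have : DecidableEq F := Classical.decEq F
  rw [Nat.card_congr (TEquiv (F := F)).toEquiv, Nat.card_eq_fintype_card,
    Fintype.card_units]

/-- Regular element: diagonal with distinct entries. -/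
lemma T_distinct {z : SL(2,F)} (hz : z ∈ T F) (hreg : z.1 0 0 * z.1 0 0 ≠ 1) :
    z.1 0 0 ≠ z.1 1 1 := by
  intro h
  exact hreg (by nth_rewrite 2 [h]; exact T_det hz)

/-- L1: anything commuting with a regular diagonal element is diagonal. -/
lemma mem_T_of_commute {z : SL(2,F)} (hz : z ∈ T F) (hreg : z.1 0 0 * z.1 0 0 ≠ 1)
    {g : SL(2,F)} (h : g * z = z * g) : g ∈ T F := by
  have hne := T_distinct hz hreg
  have e01 : g.1 0 1 * z.1 1 1 = z.1 0 0 * g.1 0 1 := by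
    have := congrArg (fun M : SL(2,F) => M.1 0 1) h
    simpa [mul_diag_entry hz g 0 1, diag_mul_entry hz g 0 1] using this
  have e10 : g.1 1 0 * z.1 0 0 = z.1 1 1 * g.1 1 0 := by
    have := congrArg (fun M : SL(2,F) => M.1 1 0) h
    simpa [mul_diag_entry hz g 1 0, diag_mul_entry hz g 1 0] using this
  constructor
  · by_contra hb
    apply hne
    have h2 : g.1 0 1 * (z.1 1 1 - z.1 0 0) = 0 := by linear_combination e01
    rcases mul_eq_zero.mp h2 with h3 | h3
    · exact absurd h3 hb
    · exact (sub_eq_zero.mp h3).symm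
  · by_contra hb
    apply hne
    have h2 : g.1 1 0 * (z.1 0 0 - z.1 1 1) = 0 := by linear_combination e10
    rcases mul_eq_zero.mp h2 with h3 | h3
    · exact absurd h3 hb
    · exact sub_eq_zero.mp h3

/-- Diagonal elements commute. -/
lemma T_commute {A B : SL(2,F)} (hA : A ∈ T F) (hB : B ∈ T F) : A * B = B * A := by
  ext i j
  rw [mul_diag_entry hB A i j, diag_mul_entry hB A i j]
  fin_cases i <;> fin_cases j <;> simp [hA.1, hA.2, mul_comm]


/-- L2: an element conjugating a regular diagonal element into the torus is
diagonal or antidiagonal. -/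
lemma mem_T_or_anti {z w g : SL(2,F)} (hz : z ∈ T F) (hreg : z.1 0 0 * z.1 0 0 ≠ 1)
    (hw : w ∈ T F) (h : g * z = w * g) :
    g ∈ T F ∨ (g.1 0 0 = 0 ∧ g.1 1 1 = 0) := by
  have hne := T_distinct hz hreg
  have key' : ∀ i j, g.1 i j = 0 ∨ z.1 j j = w.1 i i := by
    intro i j
    have hk : g.1 i j * z.1 j j = w.1 i i * g.1 i j := by
      have := congrArg (fun M : SL(2,F) => M.1 i j) h
      simpa [mul_diag_entry hz g i j, diag_mul_entry hw g i j] using this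
    rcases eq_or_ne (g.1 i j) 0 with h0 | h0
    · exact Or.inl h0
    · exact Or.inr (mul_left_cancel₀ h0 (by linear_combination hk))
  have hdetg := det_entry g
  rcases eq_or_ne (g.1 0 0) 0 with ha | ha
  · right
    refine ⟨ha, ?_⟩
    have hc : g.1 1 0 ≠ 0 := by
      intro hc
      rw [ha, hc] at hdetg
      simp at hdetg
    by_contra hd
    have h11 := (key' 1 1).resolve_left hd
    have h10 := (key' 1 0).resolve_left hc
    exact hne (h10.trans h11.symm)
  · left
    have h00' := (key' 0 0).resolve_left ha
    have hb : g.1 0 1 = 0 := by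
      by_contra hb
      exact hne (h00'.trans ((key' 0 1).resolve_left hb).symm)
    have hd : g.1 1 1 ≠ 0 := by
      intro hd
      rw [hb, hd] at hdetg
      simp at hdetg
    have h11 := (key' 1 1).resolve_left hd
    have hc : g.1 1 0 = 0 := by
      by_contra hc
      exact hne (((key' 1 0).resolve_left hc).trans h11.symm)
    exact ⟨hb, hc⟩

/-- The Weyl element. -/
def wEl : SL(2,F) := ⟨!![0, 1; -1, 0], by rw [Matrix.det_fin_two_of]; ring⟩

@[simp] lemma wEl00 : (wEl : SL(2,F)).1 0 0 = 0 := rfl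
@[simp] lemma wEl01 : (wEl : SL(2,F)).1 0 1 = 1 := rfl
@[simp] lemma wEl10 : (wEl : SL(2,F)).1 1 0 = -1 := rfl
@[simp] lemma wEl11 : (wEl : SL(2,F)).1 1 1 = 0 := rfl

lemma wEl_mul_mem_T {g : SL(2,F)} (hg : g.1 0 0 = 0 ∧ g.1 1 1 = 0) :
    (wEl)⁻¹ * g ∈ T F := by
  constructor
  · rw [mul_entry, inv00, inv01]
    simp [hg.2]
  · rw [mul_entry, inv10, inv11]
    simp [hg.1]

lemma wEl_conj' {z : SL(2,F)} (hz : z ∈ T F) : (wEl)⁻¹ * z * wEl = z⁻¹ := by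
  ext i j
  fin_cases i <;> fin_cases j <;>
    simp [mul_entry, inv00, inv01, inv10, inv11, hz.1, hz.2]

lemma wEl_conj {z : SL(2,F)} (hz : z ∈ T F) : wEl * z * (wEl)⁻¹ = z⁻¹ := by
  ext i j
  fin_cases i <;> fin_cases j <;>
    simp [mul_entry, inv00, inv01, inv10, inv11, hz.1, hz.2]

section Structure

variable {Q' : Subgroup SL(2,F)} (hQT : Q' ≤ T F)
  {y : SL(2,F)} (hy : y ∈ Q') (hyreg : y.1 0 0 * y.1 0 0 ≠ 1)

include hQT hy hyreg in
lemma centralizer_eq_T :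
    Subgroup.centralizer (Q' : Set SL(2,F)) = T F := by
  ext g
  rw [Subgroup.mem_centralizer_iff]
  constructor
  · intro h
    exact mem_T_of_commute (hQT hy) hyreg (h y hy).symm
  · intro hg h hh
    exact T_commute (hQT hh) hg

include hQT in
lemma T_le_normalizer : T F ≤ (Subgroup.normalizer (Q' : Set SL(2,F))) := by
  intro t ht
  rw [Subgroup.mem_normalizer_iff]
  intro h
  constructor
  · intro hh
    have : t * h * t⁻¹ = h := by
      rw [T_commute ht (hQT hh), mul_inv_cancel_right]
    rw [this]
    exact hh
  · intro hk
    have hkT : t * h * t⁻¹ ∈ T F := hQT hk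
    have : h = t⁻¹ * (t * h * t⁻¹) * t := by group
    rw [this, T_commute (inv_mem ht) hkT]
    have : t * h * t⁻¹ * t⁻¹ * t = t * h * t⁻¹ := by group
    rw [this]
    exact hk

include hQT in
lemma wEl_mem_normalizer : wEl ∈ (Subgroup.normalizer (Q' : Set SL(2,F))) := by
  rw [Subgroup.mem_normalizer_iff]
  intro h
  constructor
  · intro hh
    rw [wEl_conj (hQT hh)]
    exact inv_mem hh
  · intro hk
    have : h = (wEl⁻¹ * (wEl * h * wEl⁻¹) * wEl)⁻¹⁻¹ := by group
    rw [this, wEl_conj' (hQT hk)]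
    exact inv_mem (inv_mem (inv_mem hk))

include hQT hy hyreg in
lemma normalizer_sub (g : SL(2,F)) (hg : g ∈ (Subgroup.normalizer (Q' : Set SL(2,F)))) :
    g ∈ T F ∨ (g.1 0 0 = 0 ∧ g.1 1 1 = 0) := by
  have hk : g * y * g⁻¹ ∈ Q' := by
    rw [← Subgroup.mem_normalizer_iff.mp hg y]
    exact hy
  refine mem_T_or_anti (hQT hy) hyreg (hQT hk) ?_
  group

include hQT hy hyreg in
lemma normalizer_card [Finite F] :
    Nat.card (Subgroup.normalizer (Q' : Set SL(2,F))) = 2 * Nat.card (T F) := by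
  classical
  set f : (↥(T F) ⊕ ↥(T F)) → ↥(Subgroup.normalizer (Q' : Set SL(2,F))) :=
    Sum.elim (fun t => ⟨(t : SL(2,F)), T_le_normalizer hQT t.2⟩)
      (fun t => ⟨wEl * (t : SL(2,F)),
        mul_mem (wEl_mem_normalizer hQT) (T_le_normalizer hQT t.2)⟩) with hf
  have anti_ne_T : ∀ (t s : ↥(T F)), (t : SL(2,F)) ≠ wEl * (s : SL(2,F)) := by
    intro t s hts
    have h1 : (wEl * (s : SL(2,F))).1 0 0 = 0 := by
      rw [mul_entry]
      simp [s.2.2]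
    have h2 := T_det t.2
    rw [hts, h1, zero_mul] at h2
    exact zero_ne_one h2
  have hinj : Function.Injective f := by
    rintro (t | t) (s | s) hts <;>
      simp only [hf, Sum.elim_inl, Sum.elim_inr, Subtype.mk.injEq] at hts
    · exact congrArg Sum.inl (Subtype.ext hts)
    · exact absurd hts (anti_ne_T t s)
    · exact absurd hts.symm (anti_ne_T s t)
    · exact congrArg Sum.inr (Subtype.ext (mul_left_cancel hts))
  have hsurj : Function.Surjective f := by
    rintro ⟨g, hg⟩
    rcases normalizer_sub hQT hy hyreg g hg with hgT | hgA
    · exact ⟨Sum.inl ⟨g, hgT⟩, rfl⟩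
    · refine ⟨Sum.inr ⟨wEl⁻¹ * g, wEl_mul_mem_T hgA⟩, ?_⟩
      simp only [hf, Sum.elim_inr, Subtype.mk.injEq]
      group
  have := Nat.card_eq_of_bijective f ⟨hinj, hsurj⟩
  rw [← this, Nat.card_sum]
  ring

end Structure


section Transfer
variable {G : Type*} [Group G]

lemma centralizer_map_equiv (e : G ≃* G) (H : Subgroup G) :
    Subgroup.centralizer ((H.map e.toMonoidHom : Subgroup G) : Set G)
      = (Subgroup.centralizer (H : Set G)).map e.toMonoidHom := by
  ext g
  rw [Subgroup.mem_map_equiv, Subgroup.mem_centralizer_iff, Subgroup.mem_centralizer_iff]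
  constructor
  · intro h k hk
    have h1 := h (e k) (by rw [SetLike.mem_coe, Subgroup.mem_map_equiv]; simpa using hk)
    have h2 := congrArg e.symm h1
    simpa using h2
  · intro h k hk
    rw [SetLike.mem_coe, Subgroup.mem_map_equiv] at hk
    have h1 := h (e.symm k) hk
    have h2 := congrArg e h1
    simpa using h2

lemma map_symm_map (e : G ≃* G) (H : Subgroup G) :
    (H.map e.toMonoidHom).map e.symm.toMonoidHom = H := by
  ext g
  simp [Subgroup.mem_map_equiv]

lemma one_add_nilsq_pow {R : Type*} [Ring R] {N : R} (hN : N * N = 0) : ∀ n : ℕ,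
    (1 + N) ^ n = 1 + n • N
  | 0 => by simp
  | n+1 => by
    rw [pow_succ, one_add_nilsq_pow hN n, add_mul, one_mul, mul_add, mul_one,
      smul_mul_assoc, hN, smul_zero, add_zero, succ_nsmul]
    abel

end Transfer


section Diag
open Polynomial
variable [Fintype F]

lemma cast_ne_zero_of_dvd_card_sub_one {n : ℕ} (hn : 0 < n)
    (hndvd : n ∣ Fintype.card F - 1) : (n : F) ≠ 0 := by
  intro h0
  have hring : CharP F (ringChar F) := ringChar.charP F
  obtain ⟨m, hp, hcard⟩ := FiniteField.card F (ringChar F)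
  have hdvd1 : ringChar F ∣ n := (CharP.cast_eq_zero_iff F (ringChar F) n).mp h0
  have hdvd2 : ringChar F ∣ Fintype.card F - 1 := hdvd1.trans hndvd
  have hdvd3 : ringChar F ∣ Fintype.card F := by
    rw [hcard]
    exact dvd_pow_self _ (by positivity)
  have hF1 : 1 ≤ Fintype.card F := Fintype.card_pos
  have h1 : ringChar F ∣ 1 := by
    have := Nat.dvd_sub hdvd3 hdvd2
    rwa [Nat.sub_sub_self hF1] at this
  exact hp.ne_one (Nat.dvd_one.mp h1)

lemma exists_conj_diag {x : SL(2,F)} {ℓ : ℕ} (hℓ : ℓ.Prime) (hℓ_odd : Odd ℓ)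
    (hdvd : ℓ ∣ Fintype.card F - 1) (hq_odd : Odd (Fintype.card F))
    (hx1 : x ≠ 1) (hxl : x ^ ℓ = 1) :
    ∃ (p dd : SL(2,F)), dd ∈ T F ∧ dd.1 0 0 * dd.1 0 0 ≠ 1 ∧ p⁻¹ * x * p = dd := by
  classical
  have h2F : (2 : F) ≠ 0 := by
    refine cast_ne_zero_of_dvd_card_sub_one (by norm_num) ?_
    exact (Nat.Odd.sub_odd hq_odd odd_one).two_dvd
  have hlF : (ℓ : F) ≠ 0 := cast_ne_zero_of_dvd_card_sub_one hℓ.pos hdvd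
  have hneg : (-1 : F) ≠ 1 := fun hcon => h2F (by linear_combination -hcon)
  set M := x.1 with hMdef
  have hMl : M ^ ℓ = 1 := by
    have := congrArg (fun z : SL(2,F) => z.1) hxl
    simpa using this
  have hM1 : M ≠ 1 := fun hcon => hx1 (Subtype.ext hcon)
  obtain ⟨a, b, c, d, hM⟩ : ∃ a b c d, M = !![a, b; c, d] :=
    ⟨M 0 0, M 0 1, M 1 0, M 1 1, Matrix.eta_fin_two M⟩
  have hdet : a * d - b * c = 1 := by
    have h := det_entry x
    rw [← hMdef, hM] at h
    simpa using h
  -- x is not a scalar matrix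
  have hscalar : ¬ (b = 0 ∧ c = 0 ∧ a = d) := by
    rintro ⟨hb, hc, had⟩
    have ha2 : a * a = 1 := by
      rw [hb, hc] at hdet
      nth_rewrite 2 [had]
      linear_combination hdet
    have hMeq : M = a • (1 : Matrix (Fin 2) (Fin 2) F) := by
      rw [hM, hb, hc, ← had]
      ext i j
      fin_cases i <;> fin_cases j <;> simp [Matrix.one_apply]
    rcases mul_self_eq_one_iff.mp ha2 with h1 | h1
    · exact hM1 (by rw [hMeq, h1, one_smul])
    · have hpow : M ^ ℓ = -1 := by
        rw [hMeq, h1, neg_smul, one_smul]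
        exact Odd.neg_one_pow hℓ_odd
      rw [hMl] at hpow
      have h3 := congrFun (congrFun hpow 0) 0
      simp [Matrix.one_apply] at h3
      exact hneg h3.symm
  -- Cayley–Hamilton for 2×2 by hand
  have hCH : M * M = (a + d) • M - 1 := by
    rw [hM, Matrix.mul_fin_two]
    ext i j
    fin_cases i <;> fin_cases j <;>
      simp [Matrix.one_apply] <;>
        first | ring1 | linear_combination -hdet
  set P : F[X] := X ^ 2 + (C (-(a + d)) * X + C 1) with hP
  have hPmonic : P.Monic := by
    rw [hP]
    exact Polynomial.monic_X_pow_add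
      (lt_of_le_of_lt Polynomial.degree_linear_le (by norm_num))
  have hPdeg : P.degree = 2 := by
    have h1 : P = C 1 * X ^ 2 + C (-(a + d)) * X + C 1 := by
      rw [hP, Polynomial.C_1, one_mul]; ring
    rw [h1]
    exact Polynomial.degree_quadratic one_ne_zero
  have haev : Polynomial.aeval M P = 0 := by
    have h1 : Polynomial.aeval M P = M ^ 2 + ((-(a + d)) • M + 1) := by
      rw [hP]
      simp [Algebra.algebraMap_eq_smul_one, smul_mul_assoc, add_mul, add_smul, neg_smul]
    rw [h1, pow_two, hCH]
    module
  set Pl : F[X] := X ^ ℓ - C 1 with hPl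
  have haevPl : Polynomial.aeval M Pl = 0 := by
    simp [hPl, hMl]
  have hrr : Polynomial.aeval M (Pl %ₘ P) = 0 := by
    have hmod := Polynomial.modByMonic_add_div Pl P
    have h2 := congrArg (Polynomial.aeval M) hmod
    rw [_root_.map_add, _root_.map_mul, haev, zero_mul, add_zero] at h2
    rw [h2, haevPl]
  have hdeg1 : (Pl %ₘ P).degree ≤ 1 := by
    have h2 := Polynomial.degree_modByMonic_lt Pl hPmonic
    rw [hPdeg] at h2
    by_cases hz : Pl %ₘ P = 0
    · rw [hz]; simp
    · rw [Polynomial.degree_eq_natDegree hz] at h2 ⊢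
      exact_mod_cast Nat.lt_succ_iff.mp (by exact_mod_cast h2)
  have hrform := Polynomial.eq_X_add_C_of_degree_le_one hdeg1
  set r1 := (Pl %ₘ P).coeff 1 with hr1def
  set r0 := (Pl %ₘ P).coeff 0 with hr0def
  have heq : r1 • M + r0 • (1 : Matrix (Fin 2) (Fin 2) F) = 0 := by
    rw [hrform, _root_.map_add, _root_.map_mul, Polynomial.aeval_X, Polynomial.aeval_C,
      Polynomial.aeval_C, Algebra.algebraMap_eq_smul_one, Algebra.algebraMap_eq_smul_one,
      smul_mul_assoc, one_mul] at hrr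
    exact hrr
  have hr1 : r1 = 0 := by
    by_contra hcon
    apply hscalar
    have e01 : r1 * b = 0 := by
      have h3 := congrFun (congrFun heq 0) 1
      rw [hM] at h3
      simpa [Matrix.one_apply] using h3
    have e10 : r1 * c = 0 := by
      have h3 := congrFun (congrFun heq 1) 0
      rw [hM] at h3
      simpa [Matrix.one_apply] using h3
    have e00 : r1 * a + r0 = 0 := by
      have h3 := congrFun (congrFun heq 0) 0
      rw [hM] at h3
      simpa [Matrix.one_apply] using h3
    have e11 : r1 * d + r0 = 0 := by
      have h3 := congrFun (congrFun heq 1) 1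
      rw [hM] at h3
      simpa [Matrix.one_apply] using h3
    refine ⟨(mul_eq_zero.mp e01).resolve_left hcon,
      (mul_eq_zero.mp e10).resolve_left hcon, ?_⟩
    have h4 : r1 * a = r1 * d := by linear_combination e00 - e11
    exact mul_left_cancel₀ hcon h4
  have hr0 : r0 = 0 := by
    have h3 := congrFun (congrFun heq 0) 0
    rw [hM] at h3
    simpa [Matrix.one_apply, hr1] using h3
  have hrzero : Pl %ₘ P = 0 := by rw [hrform, hr1, hr0]; simp
  have hPdvd : P ∣ Pl := (Polynomial.modByMonic_eq_zero_iff_dvd hPmonic).mp hrzero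
  -- the polynomial X^ℓ - 1 splits over F
  haveI : Fact ℓ.Prime := ⟨hℓ⟩
  have hdvdU : ℓ ∣ Fintype.card Fˣ := by rw [Fintype.card_units]; exact hdvd
  obtain ⟨ζ, hζord⟩ := exists_prime_orderOf_dvd_card (G := Fˣ) ℓ hdvdU
  have hζ : IsPrimitiveRoot ((ζ : Fˣ) : F) ℓ := by
    have h1 : IsPrimitiveRoot ζ ℓ := hζord ▸ IsPrimitiveRoot.orderOf ζ
    exact IsPrimitiveRoot.coe_units_iff.mpr h1
  have hPlne : Pl ≠ 0 := by
    rw [hPl]; exact Polynomial.X_pow_sub_C_ne_zero hℓ.pos 1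
  have hsplit : Pl.Splits := by
    rw [hPl]; exact Polynomial.X_pow_sub_one_splits hζ
  have hPsplit : P.Splits :=
    Polynomial.Splits.of_dvd hsplit hPlne hPdvd
  obtain ⟨lam, hlam⟩ : ∃ lam, P.eval₂ (RingHom.id F) lam = 0 :=
    hPsplit.exists_eval_eq_zero (by rw [hPdeg]; norm_num)
  have hlamP : lam * lam - (a + d) * lam + 1 = 0 := by
    rw [hP] at hlam
    simp only [Polynomial.eval₂_add, Polynomial.eval₂_mul, Polynomial.eval₂_X,
      Polynomial.eval₂_C, Polynomial.eval₂_pow, RingHom.id_apply] at hlam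
    linear_combination hlam
  have hlamL : lam ^ ℓ = 1 := by
    obtain ⟨k, hk⟩ := hPdvd
    have h2 : Pl.eval₂ (RingHom.id F) lam = 0 := by
      rw [hk, Polynomial.eval₂_mul, hlam, zero_mul]
    rw [hPl, Polynomial.eval₂_sub, Polynomial.eval₂_pow, Polynomial.eval₂_X,
      Polynomial.eval₂_C] at h2
    simp only [RingHom.id_apply] at h2
    linear_combination h2
  have hlam0 : lam ≠ 0 := by
    intro hcon
    rw [hcon, zero_pow hℓ.pos.ne'] at hlamL
    exact zero_ne_one hlamL
  set mu : F := (a + d) - lam with hmu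
  have hprod : lam * mu = 1 := by rw [hmu]; linear_combination -hlamP
  have hmuP : mu * mu - (a + d) * mu + 1 = 0 := by rw [hmu]; linear_combination hlamP
  have hmu0 : mu ≠ 0 := by
    intro hcon
    rw [hcon, mul_zero] at hprod
    exact zero_ne_one hprod
  have hlamne : lam ≠ mu := by
    intro hcon
    rw [← hcon] at hprod
    have hl1 : lam = 1 := by
      obtain ⟨k, hk⟩ := hℓ_odd
      calc lam = (lam * lam) ^ k * lam := by rw [hprod, one_pow, one_mul]
        _ = lam ^ ℓ := by rw [hk, pow_add, pow_mul, pow_one, pow_two]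
        _ = 1 := hlamL
    have ht2 : a + d = 2 := by
      rw [hl1] at hlamP
      linear_combination -hlamP
    set N : Matrix (Fin 2) (Fin 2) F := M - 1 with hN
    have hNne : N ≠ 0 := by
      intro hcon2
      apply hM1
      rw [← sub_eq_zero]
      exact hcon2
    have hN2 : N * N = 0 := by
      have expand : (M - 1) * (M - 1) = M * M - M - M + 1 := by noncomm_ring
      rw [hN, expand, hCH, ht2]
      module
    have hMN : M = 1 + N := by rw [hN]; abel
    have hpowN : M ^ ℓ = 1 + ℓ • N := by rw [hMN]; exact one_add_nilsq_pow hN2 ℓ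
    rw [hMl] at hpowN
    have hsm : ℓ • N = 0 := left_eq_add.mp hpowN
    apply hNne
    ext i j
    have h3 := congrFun (congrFun hsm i) j
    simp only [Matrix.smul_apply, Matrix.zero_apply, nsmul_eq_mul] at h3
    simpa using (mul_eq_zero.mp h3).resolve_left hlF
  -- the diagonal target
  have hdd_det : (!![lam, 0; 0, mu] : Matrix (Fin 2) (Fin 2) F).det = 1 := by
    rw [Matrix.det_fin_two_of]
    simpa using hprod
  set dd : SL(2,F) := ⟨!![lam, 0; 0, mu], hdd_det⟩ with hdd
  have hddT : dd ∈ T F := by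
    constructor <;> simp [hdd]
  have hddreg : dd.1 0 0 * dd.1 0 0 ≠ 1 := by
    have h5 : dd.1 0 0 = lam := by simp [hdd]
    rw [h5]
    intro hcon
    exact hlamne (mul_left_cancel₀ hlam0 (hcon.trans hprod.symm))
  suffices hxp : ∃ p : SL(2,F), x * p = p * dd by
    obtain ⟨p, hp⟩ := hxp
    refine ⟨p, dd, hddT, hddreg, ?_⟩
    rw [mul_assoc, hp, ← mul_assoc, inv_mul_cancel, one_mul]
  -- construct the conjugating matrix
  rcases ne_or_eq c 0 with hc | hc
  · -- c ≠ 0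
    set δ : F := c * (lam - mu) with hδdef
    have hδ : δ ≠ 0 := mul_ne_zero hc (sub_ne_zero.mpr hlamne)
    have hdetPE : ((!![lam - d, mu - d; c, c] * !![δ⁻¹, 0; 0, 1] : Matrix (Fin 2) (Fin 2) F)).det = 1 := by
      rw [Matrix.det_mul, Matrix.det_fin_two_of, Matrix.det_fin_two_of, hδdef]
      field_simp
      ring
    refine ⟨(⟨_, hdetPE⟩ : SL(2,F)), ?_⟩
    apply Subtype.ext
    show M * (!![lam - d, mu - d; c, c] * !![δ⁻¹, 0; 0, 1]) = _
    have h1 : M * !![lam - d, mu - d; c, c] = !![lam - d, mu - d; c, c] * !![lam, 0; 0, mu] := by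
      rw [hM, Matrix.mul_fin_two, Matrix.mul_fin_two]
      ext i j
      fin_cases i <;> fin_cases j <;> simp <;>
        first
          | ring1
          | linear_combination -hlamP - hdet
          | linear_combination -hmuP - hdet
    have h2 : !![lam, 0; 0, mu] * !![δ⁻¹, 0; 0, 1] = !![δ⁻¹, 0; 0, 1] * (!![lam, 0; 0, mu] : Matrix (Fin 2) (Fin 2) F) := by
      rw [Matrix.mul_fin_two, Matrix.mul_fin_two]
      ext i j
      fin_cases i <;> fin_cases j <;> simp <;> ring
    calc M * (!![lam - d, mu - d; c, c] * !![δ⁻¹, 0; 0, 1])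
        = (M * !![lam - d, mu - d; c, c]) * !![δ⁻¹, 0; 0, 1] := by rw [Matrix.mul_assoc]
      _ = (!![lam - d, mu - d; c, c] * !![lam, 0; 0, mu]) * !![δ⁻¹, 0; 0, 1] := by rw [h1]
      _ = !![lam - d, mu - d; c, c] * (!![lam, 0; 0, mu] * !![δ⁻¹, 0; 0, 1]) := by rw [Matrix.mul_assoc]
      _ = !![lam - d, mu - d; c, c] * (!![δ⁻¹, 0; 0, 1] * !![lam, 0; 0, mu]) := by rw [h2]
      _ = (!![lam - d, mu - d; c, c] * !![δ⁻¹, 0; 0, 1]) * !![lam, 0; 0, mu] := by rw [Matrix.mul_assoc]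
  rcases ne_or_eq b 0 with hb | hb
  · -- b ≠ 0 (and c = 0)
    set δ : F := b * (mu - lam) with hδdef
    have hδ : δ ≠ 0 := mul_ne_zero hb (sub_ne_zero.mpr (Ne.symm hlamne))
    have hdetPE : ((!![b, b; lam - a, mu - a] * !![δ⁻¹, 0; 0, 1] : Matrix (Fin 2) (Fin 2) F)).det = 1 := by
      rw [Matrix.det_mul, Matrix.det_fin_two_of, Matrix.det_fin_two_of, hδdef]
      field_simp
      ring
    refine ⟨(⟨_, hdetPE⟩ : SL(2,F)), ?_⟩
    apply Subtype.ext
    show M * (!![b, b; lam - a, mu - a] * !![δ⁻¹, 0; 0, 1]) = _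
    have h1 : M * !![b, b; lam - a, mu - a] = !![b, b; lam - a, mu - a] * !![lam, 0; 0, mu] := by
      rw [hM, Matrix.mul_fin_two, Matrix.mul_fin_two]
      ext i j
      fin_cases i <;> fin_cases j <;> simp <;>
        first
          | ring1
          | linear_combination -hlamP - hdet
          | linear_combination -hmuP - hdet
    have h2 : !![lam, 0; 0, mu] * !![δ⁻¹, 0; 0, 1] = !![δ⁻¹, 0; 0, 1] * (!![lam, 0; 0, mu] : Matrix (Fin 2) (Fin 2) F) := by
      rw [Matrix.mul_fin_two, Matrix.mul_fin_two]
      ext i j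
      fin_cases i <;> fin_cases j <;> simp <;> ring
    calc M * (!![b, b; lam - a, mu - a] * !![δ⁻¹, 0; 0, 1])
        = (M * !![b, b; lam - a, mu - a]) * !![δ⁻¹, 0; 0, 1] := by rw [Matrix.mul_assoc]
      _ = (!![b, b; lam - a, mu - a] * !![lam, 0; 0, mu]) * !![δ⁻¹, 0; 0, 1] := by rw [h1]
      _ = !![b, b; lam - a, mu - a] * (!![lam, 0; 0, mu] * !![δ⁻¹, 0; 0, 1]) := by rw [Matrix.mul_assoc]
      _ = !![b, b; lam - a, mu - a] * (!![δ⁻¹, 0; 0, 1] * !![lam, 0; 0, mu]) := by rw [h2]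
      _ = (!![b, b; lam - a, mu - a] * !![δ⁻¹, 0; 0, 1]) * !![lam, 0; 0, mu] := by rw [Matrix.mul_assoc]
  · -- b = 0 and c = 0
    have had : a * d = 1 := by linear_combination hdet + c * hb
    have hfact : (a - lam) * (a - mu) = 0 := by
      rw [hmu]
      linear_combination -hlamP - had
    rcases mul_eq_zero.mp hfact with h | h
    · have ha : a = lam := sub_eq_zero.mp h
      have h4 : lam * d = 1 := by rw [← ha]; exact had
      have hd : d = mu := mul_left_cancel₀ hlam0 (h4.trans hprod.symm)
      refine ⟨1, ?_⟩
      rw [mul_one, one_mul]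
      apply Subtype.ext
      rw [hdd]
      rw [← hMdef, hM, ha, hd, hb, hc]
    · have ha : a = mu := sub_eq_zero.mp h
      have h4 : mu * d = 1 := by rw [← ha]; exact had
      have hd : d = lam := mul_left_cancel₀ hmu0 (h4.trans (by rw [← hprod]; ring))
      refine ⟨wEl, ?_⟩
      apply Subtype.ext
      rw [Matrix.SpecialLinearGroup.coe_mul, Matrix.SpecialLinearGroup.coe_mul, ← hMdef]
      show M * !![0, 1; -1, 0] = !![0, 1; -1, 0] * (!![lam, 0; 0, mu] : Matrix (Fin 2) (Fin 2) F)
      rw [hM, ha, hd, hb, hc, Matrix.mul_fin_two, Matrix.mul_fin_two]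
      ext i j
      fin_cases i <;> fin_cases j <;> simp


end Diag


section Main
variable [Fintype F]

lemma main_result {ℓ : ℕ} (hℓ : ℓ.Prime) (hℓ_odd : Odd ℓ)
    (hdvd : ℓ ∣ Fintype.card F - 1) (hq_odd : Odd (Fintype.card F))
    (Q : Subgroup SL(2,F)) (hQp : IsPGroup ℓ Q) (hQ_ne_bot : Q ≠ ⊥) :
    IsCyclic (Subgroup.centralizer (Q : Set SL(2,F))) ∧
      Nat.card (Subgroup.centralizer (Q : Set SL(2,F))) = Fintype.card F - 1 ∧
      Nat.card (Subgroup.normalizer (Q : Set SL(2,F))) = 2 * (Fintype.card F - 1) := by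
  classical
  -- find a nontrivial central element of Q of order ℓ
  haveI : Fact ℓ.Prime := ⟨hℓ⟩
  haveI : Nontrivial ↥Q := Q.nontrivial_iff_ne_bot.mpr hQ_ne_bot
  haveI : Finite ↥Q := inferInstance
  haveI := hQp.center_nontrivial
  obtain ⟨u, hu_ne⟩ := exists_ne (1 : Subgroup.center ↥Q)
  set v0 : ↥Q := (u : ↥Q) with hv0
  have hv0_ne : v0 ≠ 1 := by
    intro h
    exact hu_ne (Subtype.ext h)
  obtain ⟨k, hk⟩ := hQp v0
  obtain ⟨j, hjk, hordeq⟩ := (Nat.dvd_prime_pow hℓ).mp (orderOf_dvd_of_pow_eq_one hk)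
  have hj0 : j ≠ 0 := by
    intro h
    rw [h, pow_zero] at hordeq
    exact hv0_ne (orderOf_eq_one_iff.mp hordeq)
  set v : ↥Q := v0 ^ (ℓ ^ (j - 1)) with hv
  have hv_pow : v ^ ℓ = 1 := by
    have hexp : ℓ ^ (j - 1) * ℓ = ℓ ^ j := by
      rw [← pow_succ]
      congr 1
      omega
    rw [hv, ← pow_mul, hexp, ← hordeq, pow_orderOf_eq_one]
  have hv_ne : v ≠ 1 := by
    intro h
    have hdvd2 := orderOf_dvd_of_pow_eq_one (h ▸ rfl : v0 ^ (ℓ ^ (j - 1)) = 1)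
    rw [hordeq] at hdvd2
    have := (Nat.pow_dvd_pow_iff_le_right hℓ.one_lt).mp hdvd2
    omega
  have hv_center : v ∈ Subgroup.center ↥Q := by
    rw [hv, hv0]
    exact pow_mem u.2 _
  set x : SL(2,F) := (v : SL(2,F)) with hx
  have hx_mem : x ∈ Q := v.2
  have hx_ne : x ≠ 1 := by
    intro h
    exact hv_ne (Subtype.ext h)
  have hx_pow : x ^ ℓ = 1 := by
    have := congrArg (fun z : ↥Q => (z : SL(2,F))) hv_pow
    simpa using this
  have hx_comm : ∀ g ∈ Q, x * g = g * x := by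
    intro g hg
    have h1 := (Subgroup.mem_center_iff.mp hv_center) ⟨g, hg⟩
    have := congrArg (fun z : ↥Q => (z : SL(2,F))) h1
    simpa using this.symm
  -- diagonalize
  obtain ⟨p, dd, hddT, hddreg, hpd⟩ := exists_conj_diag hℓ hℓ_odd hdvd hq_odd hx_ne hx_pow
  set φ : SL(2,F) ≃* SL(2,F) := MulAut.conj p⁻¹ with hφ
  set Q' : Subgroup SL(2,F) := Q.map φ.toMonoidHom with hQ'
  have hy : dd ∈ Q' := by
    refine ⟨x, hx_mem, ?_⟩
    rw [hφ]
    simpa [MulAut.conj_apply] using hpd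
  have hφx : φ x = dd := by
    rw [hφ]
    simpa [MulAut.conj_apply] using hpd
  have hQ'T : Q' ≤ T F := by
    rintro g ⟨w, hw, rfl⟩
    refine mem_T_of_commute hddT hddreg ?_
    show φ w * dd = dd * φ w
    rw [← hφx, ← _root_.map_mul, ← _root_.map_mul, hx_comm w hw]
  have hcent' : Subgroup.centralizer (Q' : Set SL(2,F)) = T F :=
    centralizer_eq_T hQ'T hy hddreg
  have hcentQ : Subgroup.centralizer (Q : Set SL(2,F)) = (T F).map φ.symm.toMonoidHom := by
    have h1 := centralizer_map_equiv φ Q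
    rw [← hQ', hcent'] at h1
    rw [← map_symm_map φ (Subgroup.centralizer (Q : Set SL(2,F))), ← h1]
  have hTiso : (T F) ≃* ((T F).map φ.symm.toMonoidHom : Subgroup SL(2,F)) :=
    MulEquiv.subgroupMap φ.symm (T F)
  haveI hTc : IsCyclic (T F) := isCyclic_T
  refine ⟨?_, ?_, ?_⟩
  · rw [hcentQ]
    exact isCyclic_of_surjective hTiso.toMonoidHom hTiso.surjective
  · rw [hcentQ, ← Nat.card_congr hTiso.toEquiv]
    exact card_T
  · have h1 : (Subgroup.normalizer (Q' : Set SL(2,F))) = ((Subgroup.normalizer (Q : Set SL(2,F)))).map φ.toMonoidHom := by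
      rw [hQ']
      exact (Subgroup.map_equiv_normalizer_eq Q φ).symm
    have h2 := normalizer_card hQ'T hy hddreg
    rw [h1] at h2
    have h3 : Nat.card (Subgroup.normalizer (Q : Set SL(2,F)))
        = Nat.card (((Subgroup.normalizer (Q : Set SL(2,F)))).map φ.toMonoidHom : Subgroup SL(2,F)) :=
      Nat.card_congr (MulEquiv.subgroupMap φ (Subgroup.normalizer (Q : Set SL(2,F)))).toEquiv
    rw [h3, h2, card_T]

end Main

end SL2Aux

/-- If `ℓ` is an odd prime dividing `q - 1` and `Q` is a nontrivial `ℓ`-subgroup of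
`SL(2, F)`, then the centralizer of `Q` is cyclic of order `q - 1` and the normalizer
of `Q` has cardinality `2 (q - 1)`. -/
theorem centralizer_cyclic_and_normalizer_card_sub_one
    (F : Type*) [Field F] [Fintype F] (q ℓ : ℕ) (hq : Fintype.card F = q)
    (hq_odd : Odd q) (hℓ : ℓ.Prime) (hℓ_odd : Odd ℓ) (hdvd : ℓ ∣ q - 1)
    (Q : Subgroup SL(2, F)) (hQp : IsPGroup ℓ Q) (hQ_ne_bot : Q ≠ ⊥) :
    IsCyclic (Subgroup.centralizer (Q : Set SL(2, F))) ∧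
      Nat.card (Subgroup.centralizer (Q : Set SL(2, F))) = q - 1 ∧
      Nat.card (Subgroup.normalizer (Q : Set SL(2, F))) = 2 * (q - 1) := by
  subst hq
  exact SL2Aux.main_result hℓ hℓ_odd hdvd hq_odd Q hQp hQ_ne_bot
end

section
/- Assume q ≡ 3 (mod 8) or q ≡ 5 (mod 8). Then every Sylow 2-subgroup of PSL₂(F) is a Klein four-group, i.e. isomorphic to C₂ × C₂. -/
open Matrix
open scoped MatrixGroups

section Aux
set_option linter.unusedSectionVars false

variable {F : Type*} [Field F] [Fintype F]

private theorem mySL.det_surj :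
    Function.Surjective (Matrix.GeneralLinearGroup.det : GL (Fin 2) F →* Fˣ) := by
  intro u
  refine ⟨Matrix.GeneralLinearGroup.mkOfDetNeZero (Matrix.diagonal ![u.val, 1]) ?_, ?_⟩
  · simp [Matrix.det_diagonal, Fin.prod_univ_two]
  · ext
    rw [Matrix.GeneralLinearGroup.val_det_apply]
    show (Matrix.diagonal ![u.val, 1]).det = u.val
    simp [Matrix.det_diagonal, Fin.prod_univ_two]

private noncomputable def mySL.equivKer :
    SL(2,F) ≃* (Matrix.GeneralLinearGroup.det : GL (Fin 2) F →* Fˣ).ker where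
  toFun x := ⟨Matrix.SpecialLinearGroup.toGL x, by
    rw [MonoidHom.mem_ker]; ext; rw [Matrix.GeneralLinearGroup.val_det_apply]
    exact x.2⟩
  invFun g := ⟨(g.1 : Matrix (Fin 2) (Fin 2) F), by
    have := g.2
    rw [MonoidHom.mem_ker] at this
    have := congrArg Units.val this
    rwa [Matrix.GeneralLinearGroup.val_det_apply] at this⟩
  left_inv x := by ext i j; rfl
  right_inv g := by ext i j; rfl
  map_mul' x y := by ext i j; rfl

private theorem mySL.card_SL :
    Nat.card SL(2,F) = Fintype.card F ^ 3 - Fintype.card F := by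
  set q := Fintype.card F with hq
  have hq2 : 2 ≤ q := Fintype.one_lt_card
  have hGL : Nat.card (GL (Fin 2) F) = (q ^ 2 - 1) * (q ^ 2 - q) := by
    rw [Matrix.card_GL_field]
    simp [Fin.prod_univ_two]; rfl
  have h1 : Nat.card (GL (Fin 2) F) = Nat.card Fˣ * Nat.card SL(2,F) := by
    rw [Subgroup.card_eq_card_quotient_mul_card_subgroup
      (Matrix.GeneralLinearGroup.det : GL (Fin 2) F →* Fˣ).ker]
    rw [Nat.card_congr (QuotientGroup.quotientKerEquivOfSurjective _ mySL.det_surj).toEquiv]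
    rw [Nat.card_congr mySL.equivKer.toEquiv]
  have hFu : Nat.card Fˣ = q - 1 := by
    classical
    rw [Nat.card_eq_fintype_card, Fintype.card_units, hq]
  have key : (q - 1) * (q ^ 3 - q) = (q ^ 2 - 1) * (q ^ 2 - q) := by
    have h3 : q ≤ q ^ 3 := Nat.le_self_pow (by norm_num) q
    have h2 : 1 ≤ q ^ 2 := Nat.one_le_pow _ _ (by omega)
    have hqq : q ≤ q ^ 2 := Nat.le_self_pow (by norm_num) q
    zify [h3, h2, hqq, (by omega : 2 ≤ q), (by omega : 1 ≤ q)]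
    ring
  have := h1
  rw [hGL, hFu, ← key] at this
  exact (Nat.eq_of_mul_eq_mul_left (by omega) this.symm)

private theorem mySL.center_eq (h2 : (-1 : F) ≠ 1) :
    Subgroup.center SL(2,F) = Subgroup.zpowers (-1 : SL(2,F)) := by
  ext x
  constructor
  · intro hx
    obtain ⟨r, hr, hrx⟩ := Matrix.SpecialLinearGroup.mem_center_iff.mp hx
    rw [Fintype.card_fin] at hr
    have hfac : (r - 1) * (r + 1) = 0 := by ring_nf; linear_combination hr
    rcases mul_eq_zero.mp hfac with h | h
    · have hr1 : r = 1 := by linear_combination h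
      have hx1 : x = 1 := Subtype.ext (by
        show (x : Matrix (Fin 2) (Fin 2) F) = (1 : Matrix (Fin 2) (Fin 2) F)
        rw [← hrx, hr1, _root_.map_one])
      rw [hx1]; exact Subgroup.one_mem _
    · have hr1 : r = -1 := by linear_combination h
      have hx1 : x = -1 := Subtype.ext (by
        show (x : Matrix (Fin 2) (Fin 2) F) = ((-1 : SL(2,F)) : Matrix (Fin 2) (Fin 2) F)
        rw [Matrix.SpecialLinearGroup.coe_neg, ← hrx, hr1, _root_.map_neg, _root_.map_one,
          Matrix.SpecialLinearGroup.coe_one])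
      rw [hx1]; exact Subgroup.mem_zpowers _
  · intro hx
    obtain ⟨k, hk⟩ := hx
    rw [← hk]
    refine Subgroup.zpow_mem _ (Subgroup.mem_center_iff.mpr fun g => ?_) k
    rw [mul_neg_one, neg_one_mul]

private theorem mySL.card_center (h2 : (-1 : F) ≠ 1) :
    Nat.card (Subgroup.center SL(2,F)) = 2 := by
  rw [mySL.center_eq h2, Nat.card_zpowers]
  refine orderOf_eq_prime neg_one_sq ?_
  intro h
  have := congrFun (congrFun (congrArg (fun x : SL(2,F) => (x : Matrix (Fin 2) (Fin 2) F)) h) 0) 0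
  simp at this
  exact h2 this

private theorem mySL.cayley (A : Matrix (Fin 2) (Fin 2) F) :
    A * A = A.trace • A - A.det • 1 := by
  ext i j
  fin_cases i <;> fin_cases j <;>
    simp [Matrix.mul_apply, Fin.sum_univ_two, Matrix.trace_fin_two, Matrix.det_fin_two,
      Matrix.one_apply] <;> ring

private theorem mySL.eq_center_of_scalar (x : SL(2,F)) (r : F)
    (h : (x : Matrix (Fin 2) (Fin 2) F) = r • 1) : x ∈ Subgroup.center SL(2,F) := by
  refine Matrix.SpecialLinearGroup.mem_center_iff.mpr ⟨r, ?_, ?_⟩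
  · have hd : Matrix.det (x : Matrix (Fin 2) (Fin 2) F) = 1 := x.2
    rw [h] at hd
    simpa [Fintype.card_fin] using hd
  · rw [h, Matrix.smul_one_eq_diagonal]
    rfl

private theorem mySL.pow_four (x : SL(2,F)) :
    (x : Matrix (Fin 2) (Fin 2) F) ^ 4 =
      ((x : Matrix (Fin 2) (Fin 2) F).trace ^ 3 - 2 * (x : Matrix (Fin 2) (Fin 2) F).trace) •
        (x : Matrix (Fin 2) (Fin 2) F) +
      (1 - (x : Matrix (Fin 2) (Fin 2) F).trace ^ 2) • 1 := by
  set A := (x : Matrix (Fin 2) (Fin 2) F) with hA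
  set t := A.trace with ht
  have hdet : A.det = 1 := x.2
  have h2 : A * A = t • A - 1 := by rw [mySL.cayley, hdet]; simp; rfl
  have h4 : A ^ 4 = (A * A) * (A * A) := by
    rw [show (4 : ℕ) = 2 + 2 from rfl, pow_add, sq]
  have e1 : (t • A - 1) * (t • A - 1) = (t * t) • (A * A) - (2 * t) • A + 1 := by
    rw [sub_mul, mul_sub, mul_sub, smul_mul_assoc, mul_smul_comm, smul_smul, one_mul, mul_one,
      one_mul]
    module
  rw [h4, h2, e1, h2, smul_sub, smul_smul]
  module

private theorem mySL.eq_one_or_neg_one_of_mem_center {x : SL(2,F)}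
    (hx : x ∈ Subgroup.center SL(2,F)) : x = 1 ∨ x = -1 := by
  obtain ⟨r, hr, hrx⟩ := Matrix.SpecialLinearGroup.mem_center_iff.mp hx
  rw [Fintype.card_fin] at hr
  have hfac : (r - 1) * (r + 1) = 0 := by ring_nf; linear_combination hr
  rcases mul_eq_zero.mp hfac with h | h
  · refine Or.inl (Subtype.ext ?_)
    show (x : Matrix (Fin 2) (Fin 2) F) = (1 : Matrix (Fin 2) (Fin 2) F)
    rw [← hrx, show r = 1 by linear_combination h, _root_.map_one]
  · refine Or.inr (Subtype.ext ?_)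
    show (x : Matrix (Fin 2) (Fin 2) F) = ((-1 : SL(2,F)) : Matrix (Fin 2) (Fin 2) F)
    rw [Matrix.SpecialLinearGroup.coe_neg, ← hrx, show r = -1 by linear_combination h,
      _root_.map_neg, _root_.map_one, Matrix.SpecialLinearGroup.coe_one]

private theorem myPSL.sq_eq_one (h2 : (-1 : F) ≠ 1) (hsq : ¬ IsSquare (2 : F))
    (y : PSL(2,F)) (hy : y ^ 4 = 1) : y ^ 2 = 1 := by
  by_contra hy2
  obtain ⟨x, rfl⟩ := QuotientGroup.mk_surjective y
  have hx4mem : x ^ 4 ∈ Subgroup.center SL(2,F) := by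
    rw [← QuotientGroup.eq_one_iff]
    exact hy
  set A := (x : Matrix (Fin 2) (Fin 2) F) with hAdef
  set t := A.trace with ht
  have hdet : A.det = 1 := x.2
  have hx2nc : x ^ 2 ∉ Subgroup.center SL(2,F) := by
    intro h
    apply hy2
    rw [← QuotientGroup.mk_pow, QuotientGroup.eq_one_iff]
    exact h
  have hxnc : x ∉ Subgroup.center SL(2,F) := fun h => hx2nc (Subgroup.pow_mem _ h 2)
  have hcoe4 : (↑(x ^ 4) : Matrix (Fin 2) (Fin 2) F) = A ^ 4 := by
    simp [hAdef]
  have hA4 : A ^ 4 = (t ^ 3 - 2 * t) • A + (1 - t ^ 2) • 1 := mySL.pow_four x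
  have hk : t ^ 3 - 2 * t = 0 := by
    by_contra hk
    rcases mySL.eq_one_or_neg_one_of_mem_center hx4mem with h4 | h4n
    · have : (t ^ 3 - 2 * t) • A = (t ^ 2) • (1 : Matrix (Fin 2) (Fin 2) F) := by
        have hA41 : A ^ 4 = 1 := by rw [← hcoe4, h4]; rfl
        rw [hA41] at hA4
        have h' : (t ^ 3 - 2 * t) • A
            = 1 - (1 - t ^ 2) • (1 : Matrix (Fin 2) (Fin 2) F) :=
          eq_sub_of_add_eq hA4.symm
        rw [h']
        module
      have hAs : A = ((t ^ 2) / (t ^ 3 - 2 * t)) • 1 := by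
        rw [div_eq_inv_mul, ← smul_smul]
        rw [← this, smul_smul, inv_mul_cancel₀ hk, one_smul]
      exact hxnc (mySL.eq_center_of_scalar x _ hAs)
    · have : (t ^ 3 - 2 * t) • A = (t ^ 2 - 2) • (1 : Matrix (Fin 2) (Fin 2) F) := by
        have hA41 : A ^ 4 = -1 := by
          rw [← hcoe4, h4n, Matrix.SpecialLinearGroup.coe_neg,
            Matrix.SpecialLinearGroup.coe_one]
        rw [hA41] at hA4
        have h' : (t ^ 3 - 2 * t) • A
            = -1 - (1 - t ^ 2) • (1 : Matrix (Fin 2) (Fin 2) F) :=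
          eq_sub_of_add_eq hA4.symm
        rw [h']
        module
      have hAs : A = ((t ^ 2 - 2) / (t ^ 3 - 2 * t)) • 1 := by
        rw [div_eq_inv_mul, ← smul_smul]
        rw [← this, smul_smul, inv_mul_cancel₀ hk, one_smul]
      exact hxnc (mySL.eq_center_of_scalar x _ hAs)
  rcases mySL.eq_one_or_neg_one_of_mem_center hx4mem with h4 | h4n
  · have ht0 : t = 0 := by
      have hA41 : A ^ 4 = 1 := by rw [← hcoe4, h4]; rfl
      rw [hA41, hk, zero_smul, zero_add] at hA4
      have h00 : (1 : F) = (1 - t ^ 2) * 1 := by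
        have := congrFun (congrFun hA4 0) 0
        simpa [Matrix.smul_apply, Matrix.one_apply] using this
      have ht2 : t ^ 2 = 0 := by linear_combination h00
      exact pow_eq_zero_iff (by norm_num) |>.mp ht2
    have hx2 : x ^ 2 = -1 := by
      refine Subtype.ext ?_
      show (↑(x ^ 2) : Matrix (Fin 2) (Fin 2) F) = ((-1 : SL(2,F)) : Matrix (Fin 2) (Fin 2) F)
      have hcoe2 : (↑(x ^ 2) : Matrix (Fin 2) (Fin 2) F) = A * A := by simp [hAdef, pow_two]
      rw [hcoe2, mySL.cayley, hdet, ← ht, ht0]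
      simp [Matrix.SpecialLinearGroup.coe_neg]
    exact hx2nc (hx2 ▸ Subgroup.mem_center_iff.mpr fun g => by
      rw [mul_neg_one, neg_one_mul])
  · have hA41 : A ^ 4 = -1 := by
      rw [← hcoe4, h4n, Matrix.SpecialLinearGroup.coe_neg, Matrix.SpecialLinearGroup.coe_one]
    rw [hA41, hk, zero_smul, zero_add] at hA4
    have h00 : (1 - t ^ 2) * 1 = (-1 : F) := by
      have := congrFun (congrFun hA4.symm 0) 0
      simpa [Matrix.smul_apply, Matrix.one_apply] using this
    exact hsq ⟨t, by linear_combination h00⟩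

end Aux

/-- If `q ≡ ±3 (mod 8)`, then every Sylow `2`-subgroup of `PSL(2, F)` is a Klein
four-group, i.e. isomorphic to `C₂ × C₂`. -/
theorem sylow_two_psl_klein_four
    (F : Type*) [Field F] [Fintype F] (q : ℕ) (hq : Fintype.card F = q)
    (hmod : q % 8 = 3 ∨ q % 8 = 5) :
    ∀ P : Sylow 2 PSL(2, F),
      Nonempty ((P : Subgroup PSL(2, F)) ≃*
        (Multiplicative (ZMod 2) × Multiplicative (ZMod 2))) := by
  classical
  intro P
  subst hq
  set q := Fintype.card F with hq
  have hodd : q % 2 = 1 := by omega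
  have hchar : ringChar F ≠ 2 := by
    intro h
    have := FiniteField.even_card_of_char_two h
    omega
  have hneg : (-1 : F) ≠ 1 := Ring.neg_one_ne_one_of_char_ne_two hchar
  have hsq : ¬ IsSquare (2 : F) := by
    rw [FiniteField.isSquare_two_iff]
    rcases hmod with h | h
    · exact fun hc => hc.1 h
    · exact fun hc => hc.2 h
  -- cardinality of PSL(2, F)
  have hcenter : Nat.card (Subgroup.center SL(2,F)) = 2 := mySL.card_center hneg
  have hSL : Nat.card SL(2,F) = q ^ 3 - q := mySL.card_SL
  have hPSL2 : Nat.card PSL(2,F) * 2 = q ^ 3 - q := by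
    have := Subgroup.card_eq_card_quotient_mul_card_subgroup (Subgroup.center SL(2,F))
    rw [hcenter, hSL] at this
    exact this.symm
  obtain ⟨m, hm, hmodd⟩ : ∃ m, Nat.card PSL(2,F) = 4 * m ∧ Odd m := by
    rcases hmod with h | h
    · refine ⟨(8 * (q / 8) + 3) * (4 * (q / 8) + 1) * (2 * (q / 8) + 1), ?_, ?_⟩
      · set k := q / 8 with hk
        have hqk : q = 8 * k + 3 := by omega
        have hcube : q ^ 3 = 8 * ((8 * k + 3) * (4 * k + 1) * (2 * k + 1)) + q := by
          rw [hqk]; ring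
        omega
      · exact (Odd.mul ⟨4 * (q / 8) + 1, by ring⟩ ⟨2 * (q / 8), by ring⟩).mul
          ⟨q / 8, by ring⟩
    · refine ⟨(8 * (q / 8) + 5) * (2 * (q / 8) + 1) * (4 * (q / 8) + 3), ?_, ?_⟩
      · set k := q / 8 with hk
        have hqk : q = 8 * k + 5 := by omega
        have hcube : q ^ 3 = 8 * ((8 * k + 5) * (2 * k + 1) * (4 * k + 3)) + q := by
          rw [hqk]; ring
        omega
      · exact (Odd.mul ⟨4 * (q / 8) + 2, by ring⟩ ⟨q / 8, by ring⟩).mul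
          ⟨2 * (q / 8) + 1, by ring⟩
  have hm0 : m ≠ 0 := by rintro rfl; exact (by simpa using hmodd)
  have hcardP : Nat.card P = 4 := by
    rw [Sylow.card_eq_multiplicity P, hm]
    have hfact : (4 * m).factorization 2 = 2 := by
      rw [show 4 * m = 2 ^ 2 * m by ring, Nat.factorization_mul (by positivity) hm0]
      rw [Finsupp.add_apply, Nat.Prime.factorization_pow Nat.prime_two,
        Finsupp.single_eq_same,
        Nat.factorization_eq_zero_of_not_dvd (by
          intro hdvd
          rcases hmodd with ⟨j, hj⟩
          omega)]
    rw [hfact]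
    norm_num
  have hexp : ∀ g : (P : Subgroup PSL(2,F)), g ^ 2 = 1 := by
    intro g
    have h4 : g ^ 4 = 1 := by
      have := pow_card_eq_one' (x := g)
      rwa [hcardP] at this
    have h4' : ((g : PSL(2,F))) ^ 4 = 1 := by
      have := congrArg (Subtype.val) h4
      simpa using this
    have h2' : ((g : PSL(2,F))) ^ 2 = 1 := myPSL.sq_eq_one hneg hsq _ h4'
    ext
    simpa using h2'
  have hnontriv : Nontrivial (P : Subgroup PSL(2,F)) :=
    Finite.one_lt_card_iff_nontrivial.mp (by rw [hcardP]; omega)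
  haveI : IsKleinFour (P : Subgroup PSL(2,F)) := by
    constructor
    · exact hcardP
    · refine Nat.dvd_prime Nat.prime_two |>.mp
        (Monoid.exponent_dvd_of_forall_pow_eq_one hexp) |>.resolve_left ?_
      intro h1
      have := Monoid.exp_eq_one_iff.mp h1
      exact false_of_nontrivial_of_subsingleton (P : Subgroup PSL(2,F))
  haveI : IsKleinFour (Multiplicative (ZMod 2) × Multiplicative (ZMod 2)) := by
    constructor
    · simp [Nat.card_prod]
    · refine Nat.dvd_prime Nat.prime_two |>.mp
        (Monoid.exponent_dvd_of_forall_pow_eq_one (by decide)) |>.resolve_left ?_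
      intro h1
      have := Monoid.exp_eq_one_iff.mp h1
      have : (1 : Multiplicative (ZMod 2) × Multiplicative (ZMod 2))
          = (Multiplicative.ofAdd (1 : ZMod 2), 1) := Subsingleton.elim _ _
      exact absurd this (by decide)
  exact IsKleinFour.nonempty_mulEquiv
end

section
/- Assume q ≡ 3 (mod 8) and let H be a subgroup of SL₂(F) of order 4. Then the normalizer of H in SL₂(F) has cardinality 2(q+1). -/
open Matrix Polynomial
open scoped MatrixGroups

section Aux

variable {F : Type*} [Field F] [Fintype F]

lemma aux_sq_add_sq (hodd : Fintype.card F % 2 = 1) (c : F) :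
    ∃ a b : F, a ^ 2 + b ^ 2 = c := by
  obtain ⟨a, b, hab⟩ : ∃ a b, (X ^ 2 : F[X]).eval a + (X ^ 2 - C c).eval b = 0 :=
    FiniteField.exists_root_sum_quadratic (degree_X_pow 2)
      (degree_X_pow_sub_C (by norm_num) _) hodd
  refine ⟨a, b, ?_⟩
  simp only [eval_pow, eval_X, eval_sub, eval_C] at hab
  linear_combination hab

open scoped Classical in
noncomputable def circleEquiv (h2 : (2 : F) ≠ 0) (hone : ∀ t : F, 1 + t ^ 2 ≠ 0) :
    Option F ≃ {p : F × F // p.1 ^ 2 + p.2 ^ 2 = 1} where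
  toFun o := o.elim ⟨(-1, 0), by norm_num⟩
    (fun t => ⟨((1 - t ^ 2) / (1 + t ^ 2), 2 * t / (1 + t ^ 2)), by
      rw [div_pow, div_pow, ← add_div, div_eq_one_iff_eq (pow_ne_zero 2 (hone t))]
      ring⟩)
  invFun p := if p.1.1 = -1 then none else some (p.1.2 / (1 + p.1.1))
  left_inv o := by
    cases o with
    | none => simp
    | some t =>
      have ht := hone t
      have hne : (1 - t ^ 2) / (1 + t ^ 2) ≠ -1 := by
        intro h
        rw [div_eq_iff ht] at h
        exact h2 (by linear_combination h)
      simp only [Option.elim, hne, if_false, Option.some.injEq]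
      have hsum : (1:F) + (1 - t ^ 2) / (1 + t ^ 2) = 2 / (1 + t ^ 2) := by
        field_simp
        ring
      have hne0 : (1:F) + (1 - t ^ 2) / (1 + t ^ 2) ≠ 0 := by
        rw [hsum]; exact div_ne_zero h2 ht
      rw [div_eq_iff hne0, hsum]
      ring
  right_inv p := by
    obtain ⟨⟨a, b⟩, hp⟩ := p
    simp only at hp
    by_cases ha : a = -1
    · subst ha
      have hb : b = 0 := by
        have : b ^ 2 = 0 := by linear_combination hp
        exact pow_eq_zero_iff (n := 2) (by norm_num) |>.mp this
      subst hb
      simp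
    · have h1a : 1 + a ≠ 0 := fun h => ha (by linear_combination h)
      have hden : (1 + a) ^ 2 + b ^ 2 = 2 * (1 + a) := by linear_combination hp
      have hne := hone (b / (1 + a))
      simp only [ha, if_false, Option.elim]
      refine Subtype.ext (Prod.ext ?_ ?_)
      · show (1 - (b / (1 + a)) ^ 2) / (1 + (b / (1 + a)) ^ 2) = a
        rw [div_eq_iff hne]
        field_simp
        linear_combination (-(1:F) - a) * hp
      · show 2 * (b / (1 + a)) / (1 + (b / (1 + a)) ^ 2) = b
        rw [div_eq_iff hne]
        field_simp
        linear_combination (-b) * hp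

lemma mat2_eq_iff {a b c d a' b' c' d' : F} :
    !![a, b; c, d] = !![a', b'; c', d'] ↔ a = a' ∧ b = b' ∧ c = c' ∧ d = d' := by
  rw [← Matrix.ext_iff]
  constructor
  · intro h
    exact ⟨by simpa using h 0 0, by simpa using h 0 1, by simpa using h 1 0, by simpa using h 1 1⟩
  · rintro ⟨h1, h2, h3, h4⟩ i j
    fin_cases i <;> fin_cases j <;> simpa

lemma mat2_neg (a b c d : F) : -(!![a, b; c, d]) = !![-a, -b; -c, -d] := by
  rw [← Matrix.ext_iff]
  intro i j
  fin_cases i <;> fin_cases j <;> simp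

lemma sl2_invol (h2 : (2 : F) ≠ 0) (y : SL(2, F)) (hy : y * y = 1) : y = 1 ∨ y = -1 := by
  revert hy
  refine Matrix.SpecialLinearGroup.fin_two_induction
    (fun y => y * y = 1 → y = 1 ∨ y = -1) ?_ y
  intro a b c d hdet hy
  have hm : !![a, b; c, d] * !![a, b; c, d] = (1 : Matrix (Fin 2) (Fin 2) F) := by
    have := congrArg (Subtype.val) hy
    exact this
  rw [Matrix.mul_fin_two, Matrix.one_fin_two, mat2_eq_iff] at hm
  obtain ⟨h00, h01, h10, h11⟩ := hm
  by_cases had : a + d = 0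
  · exact absurd (by linear_combination -h00 - hdet + a * had : (2:F) = 0) h2
  · have hb : b = 0 := by
      rcases mul_eq_zero.mp (show b * (a + d) = 0 by linear_combination h01) with h | h
      · exact h
      · exact absurd h had
    have hc : c = 0 := by
      rcases mul_eq_zero.mp (show c * (a + d) = 0 by linear_combination h10) with h | h
      · exact h
      · exact absurd h had
    subst hb; subst hc
    have ha : a = 1 ∨ a = -1 := mul_self_eq_one_iff.mp (by linear_combination h00)
    have hd : d = a := by
      rcases ha with h | h <;> subst h
      · linear_combination hdet
      · linear_combination -hdet
    subst hd
    rcases ha with h | h <;> subst h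
    · left
      exact Subtype.ext (by rw [Matrix.SpecialLinearGroup.coe_one, Matrix.one_fin_two])
    · right
      refine Subtype.ext ?_
      rw [Matrix.SpecialLinearGroup.coe_neg, Matrix.SpecialLinearGroup.coe_one,
        Matrix.one_fin_two]
      norm_num

end Aux

/-- If `q ≡ 3 (mod 8)` and `H` is a subgroup of `SL(2, F)` of order `4`, then the
normalizer of `H` in `SL(2, F)` has cardinality `2 (q + 1)`. -/
theorem normalizer_order_four_card_q_add_one
    (F : Type*) [Field F] [Fintype F] (q : ℕ) (hq : Fintype.card F = q)
    (hmod : q % 8 = 3) (H : Subgroup SL(2, F)) (hH : Nat.card H = 4) :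
    Nat.card (Subgroup.normalizer (H : Set SL(2, F))) = 2 * (q + 1) := by
  have hq4 : Fintype.card F % 4 = 3 := by rw [hq]; omega
  have hodd : Fintype.card F % 2 = 1 := by rw [hq]; omega
  have hns : ¬ IsSquare (-1 : F) := fun h => FiniteField.isSquare_neg_one_iff.mp h hq4
  have h2 : (2 : F) ≠ 0 := fun h => hns ⟨1, by linear_combination -h⟩
  have hone : ∀ t : F, 1 + t ^ 2 ≠ 0 := fun t h => hns ⟨t, by linear_combination -h⟩
  have hne11 : (1 : SL(2, F)) ≠ -1 := by
    intro h
    have h' := congr_fun (congr_fun (congrArg Subtype.val h) 0) 0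
    rw [Matrix.SpecialLinearGroup.coe_neg, Matrix.SpecialLinearGroup.coe_one,
      Matrix.neg_apply, Matrix.one_apply_eq] at h'
    exact h2 (by linear_combination h')
  -- find a generator x of H with x * x = -1
  obtain ⟨x, hxH, hx2⟩ : ∃ x ∈ H, x * x = -1 := by
    obtain ⟨y, hyH, hy2⟩ : ∃ y ∈ H, y * y ≠ 1 := by
      by_contra hcon
      push_neg at hcon
      have hle : H ≤ Subgroup.zpowers (-1 : SL(2, F)) := by
        intro z hz
        rcases sl2_invol h2 z (hcon z hz) with h | h
        · rw [h]; exact one_mem _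
        · rw [h]; exact Subgroup.mem_zpowers _
      have hcard := Subgroup.card_le_of_le hle
      rw [hH, Nat.card_zpowers] at hcard
      have hord : orderOf (-1 : SL(2, F)) ≤ 2 :=
        Nat.le_of_dvd (by norm_num) (orderOf_dvd_of_pow_eq_one (by simp))
      omega
    refine ⟨y, hyH, ?_⟩
    have hy4 : y ^ 4 = 1 := by
      have h4 : (⟨y, hyH⟩ : H) ^ 4 = 1 := by rw [← hH]; exact pow_card_eq_one'
      have := congrArg (Subtype.val) h4
      simpa using this
    rcases sl2_invol h2 (y * y)
        (by rw [show (y*y)*(y*y) = y^4 by rw [show (4:ℕ) = 2+2 from rfl, pow_add, pow_two], hy4])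
        with h | h
    · exact absurd h hy2
    · exact h
  -- entries of x
  obtain ⟨p, r, s, d, hxm0⟩ : ∃ p r s d : F, (x : Matrix (Fin 2) (Fin 2) F) = !![p, r; s, d] :=
    ⟨_, _, _, _, Matrix.eta_fin_two _⟩
  have hneg1mat : (-1 : Matrix (Fin 2) (Fin 2) F) = !![-1, 0; 0, -1] := by
    rw [Matrix.one_fin_two, mat2_neg, mat2_eq_iff]
    norm_num
  have hmm : !![p, r; s, d] * !![p, r; s, d] = !![-1, 0; 0, -1] := by
    have h' := congrArg (Subtype.val) hx2
    rw [Matrix.SpecialLinearGroup.coe_mul, hxm0] at h'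
    rw [h']
    show ((-1 : SL(2,F)) : Matrix (Fin 2) (Fin 2) F) = _
    rw [Matrix.SpecialLinearGroup.coe_neg, Matrix.SpecialLinearGroup.coe_one, hneg1mat]
  rw [Matrix.mul_fin_two, mat2_eq_iff] at hmm
  obtain ⟨e00, e01, e10, e11⟩ := hmm
  have hdetx : p * d - r * s = 1 := by
    have h' := x.prop
    rw [hxm0, Matrix.det_fin_two_of] at h'
    exact h'
  have hd : d = -p := by
    by_cases hpd : p + d = 0
    · linear_combination hpd
    · exfalso
      have hr0 : r = 0 := by
        rcases mul_eq_zero.mp (show r * (p + d) = 0 by linear_combination e01) with h | h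
        · exact h
        · exact absurd h hpd
      exact hns ⟨p, by linear_combination -e00 + s * hr0⟩
  have hrs : r * s = -1 - p ^ 2 := by linear_combination e00
  have hr : r ≠ 0 := by
    intro h
    exact hns ⟨p, by linear_combination -hrs + s * h⟩
  have hs : s ≠ 0 := by
    intro h
    exact hns ⟨p, by linear_combination -hrs + r * h⟩
  have hrs0 : r * s ≠ 0 := mul_ne_zero hr hs
  have hxm : (x : Matrix (Fin 2) (Fin 2) F) = !![p, r; s, -p] := by
    rw [hxm0, hd]
  -- the commuting and anticommuting sets
  set A : Set SL(2, F) := {g | g * x = x * g} with hA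
  set B : Set SL(2, F) := {g | g * x = -(x * g)} with hB
  -- generic commuting elements
  have hmatdet : ∀ α β : F, α ^ 2 + β ^ 2 = 1 →
      Matrix.det !![α + β * p, β * r; β * s, α - β * p] = 1 := by
    intro α β h
    rw [Matrix.det_fin_two_of]
    linear_combination h - β ^ 2 * hrs
  have hmatcomm : ∀ α β : F,
      !![α + β * p, β * r; β * s, α - β * p] * !![p, r; s, -p]
        = !![p, r; s, -p] * !![α + β * p, β * r; β * s, α - β * p] := by
    intro α β
    rw [Matrix.mul_fin_two, Matrix.mul_fin_two, mat2_eq_iff]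
    exact ⟨by ring, by ring, by ring, by ring⟩
  -- the bijection from the circle to A
  have hAmem : ∀ (pr : {pr : F × F // pr.1 ^ 2 + pr.2 ^ 2 = 1}),
      (⟨!![pr.1.1 + pr.1.2 * p, pr.1.2 * r; pr.1.2 * s, pr.1.1 - pr.1.2 * p],
        hmatdet pr.1.1 pr.1.2 pr.2⟩ : SL(2, F)) ∈ A := by
    rintro ⟨⟨α, β⟩, hpr⟩
    show _ * x = x * _
    refine Subtype.ext ?_
    change !![α + β * p, β * r; β * s, α - β * p] * (x : Matrix (Fin 2) (Fin 2) F)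
      = (x : Matrix (Fin 2) (Fin 2) F) * !![α + β * p, β * r; β * s, α - β * p]
    rw [hxm]
    exact hmatcomm α β
  have hcardA : Nat.card ↥A = Fintype.card F + 1 := by
    have hkey : Nat.card {pr : F × F // pr.1 ^ 2 + pr.2 ^ 2 = 1} = Nat.card ↥A := by
      apply Nat.card_eq_of_bijective (fun pr => ⟨_, hAmem pr⟩)
      constructor
      · rintro ⟨⟨α, β⟩, h1⟩ ⟨⟨α', β'⟩, h2'⟩ heq
        have h' := congrArg (fun z => (z : SL(2,F)).val) (Subtype.ext_iff.mp heq)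
        simp only at h'
        rw [mat2_eq_iff] at h'
        obtain ⟨k1, k2, k3, k4⟩ := h'
        have hβ : β = β' := mul_right_cancel₀ hr k2
        have hα : α = α' := by rw [hβ] at k1; linear_combination k1
        exact Subtype.ext (Prod.ext hα hβ)
      · rintro ⟨g, hg⟩
        have hcom : (g : Matrix (Fin 2) (Fin 2) F) * !![p, r; s, -p]
            = !![p, r; s, -p] * g := by
          rw [← hxm]
          have := congrArg (Subtype.val) hg
          rw [Matrix.SpecialLinearGroup.coe_mul, Matrix.SpecialLinearGroup.coe_mul] at this
          exact this
        obtain ⟨a, b, c, dd, hgm⟩ :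
            ∃ a b c dd : F, (g : Matrix (Fin 2) (Fin 2) F) = !![a, b; c, dd] :=
          ⟨_, _, _, _, Matrix.eta_fin_two _⟩
        rw [hgm, Matrix.mul_fin_two, Matrix.mul_fin_two, mat2_eq_iff] at hcom
        obtain ⟨f00, f01, f10, f11⟩ := hcom
        have hdetg : a * dd - b * c = 1 := by
          have h' := g.prop
          rw [hgm, Matrix.det_fin_two_of] at h'
          exact h'
        have hc' : c = (b / r) * s := by
          rw [div_mul_eq_mul_div, eq_div_iff hr]
          linear_combination -f00
        have hdd' : dd = (a - (b / r) * p) - (b / r) * p := by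
          field_simp
          linear_combination -f01
        have hkey : (a * r - b * p) ^ 2 + b ^ 2 = r ^ 2 := by
          linear_combination (r^2) * hdetg + (a*r) * f01 - (b*r) * f00 + b^2 * hrs
        have hcirc : (a - (b / r) * p) ^ 2 + (b / r) ^ 2 = 1 := by
          field_simp
          linear_combination hkey
        refine ⟨⟨(a - (b / r) * p, b / r), hcirc⟩, ?_⟩
        refine Subtype.ext (Subtype.ext ?_)
        rw [hgm, mat2_eq_iff]
        exact ⟨by ring, div_mul_cancel₀ b hr, hc'.symm, hdd'.symm⟩
    rw [← hkey, ← Nat.card_congr (circleEquiv h2 hone), Nat.card_eq_fintype_card,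
      Fintype.card_option]
  -- construction of τ
  obtain ⟨u, v, huv⟩ := aux_sq_add_sq hodd ((r * s)⁻¹)
  have hτdet : Matrix.det (!![0, r; -s, 0] * !![u + v * p, v * r; v * s, u - v * p]) = 1 := by
    rw [Matrix.det_mul, Matrix.det_fin_two_of, Matrix.det_fin_two_of]
    have : (0 * 0 - r * (-s)) * ((u + v * p) * (u - v * p) - v * r * (v * s))
        = (r * s) * (u ^ 2 + v ^ 2) := by linear_combination (-(v^2) * r * s) * hrs
    rw [this, huv, mul_inv_cancel₀ hrs0]
  set τ : SL(2, F) :=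
    (⟨!![0, r; -s, 0] * !![u + v * p, v * r; v * s, u - v * p], hτdet⟩ : SL(2, F)) with hτdef
  have hτx : τ * x = -(x * τ) := by
    refine Subtype.ext ?_
    rw [Matrix.SpecialLinearGroup.coe_neg, Matrix.SpecialLinearGroup.coe_mul,
      Matrix.SpecialLinearGroup.coe_mul, hxm]
    show (!![0, r; -s, 0] * !![u + v * p, v * r; v * s, u - v * p]) * !![p, r; s, -p]
        = -(!![p, r; s, -p] * (!![0, r; -s, 0] * !![u + v * p, v * r; v * s, u - v * p]))
    have hmx : !![0, r; -s, 0] * !![p, r; s, -p] = -(!![p, r; s, -p] * !![0, r; -s, 0]) := by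
      rw [Matrix.mul_fin_two, Matrix.mul_fin_two, mat2_neg, mat2_eq_iff]
      exact ⟨by ring, by ring, by ring, by ring⟩
    calc !![0, r; -s, 0] * !![u + v * p, v * r; v * s, u - v * p] * !![p, r; s, -p]
        = !![0, r; -s, 0] * (!![u + v * p, v * r; v * s, u - v * p] * !![p, r; s, -p]) := by
          rw [Matrix.mul_assoc]
      _ = !![0, r; -s, 0] * (!![p, r; s, -p] * !![u + v * p, v * r; v * s, u - v * p]) := by
          rw [hmatcomm]
      _ = (!![0, r; -s, 0] * !![p, r; s, -p]) * !![u + v * p, v * r; v * s, u - v * p] := by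
          rw [Matrix.mul_assoc]
      _ = (-(!![p, r; s, -p] * !![0, r; -s, 0])) * !![u + v * p, v * r; v * s, u - v * p] := by
          rw [hmx]
      _ = -(!![p, r; s, -p] * (!![0, r; -s, 0] * !![u + v * p, v * r; v * s, u - v * p])) := by
          rw [Matrix.neg_mul, Matrix.mul_assoc]
  -- x has order 4 and generates H
  have hx4 : x ^ 4 = 1 := by
    rw [show x ^ 4 = (x*x)*(x*x) by rw [show (4:ℕ) = 2+2 from rfl, pow_add, pow_two], hx2]
    simp
  have hxne1 : x ≠ 1 := by
    intro h
    rw [h, mul_one] at hx2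
    exact hne11 hx2
  have hxxne1 : x * x ≠ 1 := by rw [hx2]; exact fun h => hne11 h.symm
  have horder : orderOf x = 4 := by
    have hdvd : orderOf x ∣ 4 := orderOf_dvd_of_pow_eq_one hx4
    have hle : orderOf x ≤ 4 := Nat.le_of_dvd (by norm_num) hdvd
    have hpos : 0 < orderOf x := orderOf_pos x
    have hcases : orderOf x = 1 ∨ orderOf x = 2 ∨ orderOf x = 3 ∨ orderOf x = 4 := by omega
    rcases hcases with h | h | h | h
    · exact absurd (orderOf_eq_one_iff.mp h) hxne1
    · exfalso
      have hoo := pow_orderOf_eq_one x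
      rw [h, pow_two] at hoo
      exact hxxne1 hoo
    · exfalso
      rw [h] at hdvd
      norm_num at hdvd
    · exact h
  have hzp : Subgroup.zpowers x = H :=
    Subgroup.eq_of_le_of_card_ge (Subgroup.zpowers_le.mpr hxH)
      (by rw [hH, Nat.card_zpowers, horder])
  have hx3 : x ^ (3:ℤ) = -x := by
    rw [show (3:ℤ) = ((3:ℕ):ℤ) from rfl, zpow_natCast,
      show x ^ (3:ℕ) = (x*x)*x by rw [pow_succ, pow_two], hx2, neg_mul, one_mul]
  -- normalizer = A ∪ B
  have hNAB : (Subgroup.normalizer (H : Set SL(2, F)) : Set SL(2, F)) = A ∪ B := by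
    ext g
    constructor
    · intro hg
      have hc : g * x * g⁻¹ ∈ H := (Subgroup.mem_normalizer_iff.mp hg x).mp hxH
      rw [← hzp] at hc
      obtain ⟨n, hn⟩ := Subgroup.mem_zpowers_iff.mp hc
      have hmod4 := zpow_mod_orderOf x n
      rw [horder] at hmod4
      push_cast at hmod4
      have h04 : n % 4 = 0 ∨ n % 4 = 1 ∨ n % 4 = 2 ∨ n % 4 = 3 := by omega
      rcases h04 with h | h | h | h
      · exfalso
        rw [h] at hmod4
        have hc1 : g * x * g⁻¹ = 1 := by rw [← hn, ← hmod4]; simp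
        have : x = 1 := by
          have := congrArg (fun z => g⁻¹ * z * g) hc1
          simpa [mul_assoc] using this
        exact hxne1 this
      · left
        rw [h] at hmod4
        have hc1 : g * x * g⁻¹ = x := by rw [← hn, ← hmod4]; simp
        show g * x = x * g
        have h' := congrArg (fun z => z * g) hc1
        rw [inv_mul_cancel_right] at h'
        exact h'
      · exfalso
        rw [h] at hmod4
        have hc1 : g * x * g⁻¹ = -1 := by
          rw [← hn, ← hmod4]
          rw [show x ^ (2:ℤ) = x * x by
            rw [show (2:ℤ) = ((2:ℕ):ℤ) from rfl, zpow_natCast, pow_two], hx2]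
        have hx1 : x = -1 := by
          have h' : x = g⁻¹ * (g * x * g⁻¹) * g := by group
          rw [hc1, mul_neg, neg_mul, mul_one] at h'
          simpa using h'
        rw [hx1] at hx2
        have : (1 : SL(2,F)) = -1 := by rw [← hx2]; simp
        exact hne11 this
      · right
        rw [h] at hmod4
        have hc1 : g * x * g⁻¹ = -x := by rw [← hn, ← hmod4, hx3]
        show g * x = -(x * g)
        have := congrArg (fun z => z * g) hc1
        rw [inv_mul_cancel_right] at this
        rw [this, neg_mul]
    · intro hg
      rw [SetLike.mem_coe, Subgroup.mem_normalizer_iff]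
      rcases hg with hg | hg
      · -- g commutes with x
        have hgx : g * x = x * g := hg
        have hconj : g * x * g⁻¹ = x := by rw [hgx]; group
        have hconj' : g⁻¹ * x * g = x := by
          rw [show g⁻¹ * x * g = g⁻¹ * (x * g) by group, ← hgx]; group
        intro h
        rw [← hzp]
        constructor
        · rintro hh
          obtain ⟨n, hn⟩ := Subgroup.mem_zpowers_iff.mp hh
          refine Subgroup.mem_zpowers_iff.mpr ⟨n, ?_⟩
          rw [← hn, ← conj_zpow, hconj]
        · rintro hh
          obtain ⟨n, hn⟩ := Subgroup.mem_zpowers_iff.mp hh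
          refine Subgroup.mem_zpowers_iff.mpr ⟨n, ?_⟩
          have h2' : g⁻¹ * (x ^ n) * g = h := by rw [hn]; group
          have h1 : (g⁻¹ * x * g) ^ n = g⁻¹ * x ^ n * g := by
            simpa [inv_inv] using (conj_zpow (i := n) (a := g⁻¹) (b := x))
          rw [← h2', ← h1, hconj']
      · -- g anticommutes with x
        have hgx : g * x = -(x * g) := hg
        have hconj : g * x * g⁻¹ = -x := by
          rw [hgx, neg_mul, mul_inv_cancel_right]
        have hconj' : g⁻¹ * x * g = -x := by
          have hxg : x * g = -(g * x) := by rw [hgx, neg_neg]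
          rw [mul_assoc, hxg, mul_neg, show g⁻¹ * (g * x) = x by group]
        intro h
        rw [← hzp]
        constructor
        · rintro hh
          obtain ⟨n, hn⟩ := Subgroup.mem_zpowers_iff.mp hh
          refine Subgroup.mem_zpowers_iff.mpr ⟨3 * n, ?_⟩
          rw [← hn, ← conj_zpow, hconj, ← hx3]
          exact _root_.zpow_mul x 3 n
        · rintro hh
          obtain ⟨n, hn⟩ := Subgroup.mem_zpowers_iff.mp hh
          refine Subgroup.mem_zpowers_iff.mpr ⟨3 * n, ?_⟩
          have h2' : g⁻¹ * (x ^ n) * g = h := by rw [hn]; group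
          have h1 : (g⁻¹ * x * g) ^ n = g⁻¹ * x ^ n * g := by
            simpa [inv_inv] using (conj_zpow (i := n) (a := g⁻¹) (b := x))
          rw [← h2', ← h1, hconj', ← hx3]
          exact _root_.zpow_mul x 3 n
  -- disjointness
  have hdisj : Disjoint A B := by
    rw [Set.disjoint_left]
    intro g hgA hgB
    have h1 : x * g = -(x * g) := by
      have hgA' : g * x = x * g := hgA
      have hgB' : g * x = -(x * g) := hgB
      conv_lhs => rw [← hgA']
      exact hgB'
    have h2' := congrArg (Subtype.val) h1
    rw [Matrix.SpecialLinearGroup.coe_neg] at h2'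
    have hm0 : ((x * g : SL(2,F)) : Matrix (Fin 2) (Fin 2) F) = 0 := by
      ext i j
      have := congr_fun (congr_fun h2' i) j
      rw [Matrix.neg_apply] at this
      have h2m : (2:F) * ((x * g : SL(2,F)) : Matrix (Fin 2) (Fin 2) F) i j = 0 := by
        linear_combination this
      rcases mul_eq_zero.mp h2m with h | h
      · exact absurd h h2
      · simpa using h
    have := (x * g : SL(2,F)).prop
    rw [hm0] at this
    simp at this
  -- B is the image of A under left multiplication by τ
  have hτx' : x * τ = -(τ * x) := by rw [hτx, neg_neg]
  have hτinv : τ⁻¹ * x = -(x * τ⁻¹) := by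
    calc τ⁻¹ * x = τ⁻¹ * (x * τ) * τ⁻¹ := by group
      _ = τ⁻¹ * (-(τ * x)) * τ⁻¹ := by rw [hτx']
      _ = -(τ⁻¹ * (τ * x) * τ⁻¹) := by rw [mul_neg, neg_mul]
      _ = -(x * τ⁻¹) := by rw [show τ⁻¹ * (τ * x) * τ⁻¹ = x * τ⁻¹ by group]
  have hBim : B = (fun g => τ * g) '' A := by
    ext g
    constructor
    · intro hgB
      have hgB' : g * x = -(x * g) := hgB
      refine ⟨τ⁻¹ * g, ?_, by group⟩
      show (τ⁻¹ * g) * x = x * (τ⁻¹ * g)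
      calc (τ⁻¹ * g) * x = τ⁻¹ * (g * x) := by group
        _ = τ⁻¹ * (-(x * g)) := by rw [hgB']
        _ = -(τ⁻¹ * (x * g)) := by rw [mul_neg]
        _ = -((τ⁻¹ * x) * g) := by rw [mul_assoc]
        _ = -((-(x * τ⁻¹)) * g) := by rw [hτinv]
        _ = (x * τ⁻¹) * g := by rw [neg_mul, neg_neg]
        _ = x * (τ⁻¹ * g) := by rw [mul_assoc]

    · rintro ⟨a, haA, rfl⟩
      have haA' : a * x = x * a := haA
      show (τ * a) * x = -(x * (τ * a))
      calc (τ * a) * x = τ * (a * x) := by group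
        _ = τ * (x * a) := by rw [haA']
        _ = (τ * x) * a := by group
        _ = (-(x * τ)) * a := by rw [hτx]
        _ = -(x * (τ * a)) := by rw [neg_mul, mul_assoc]
  -- final count
  have hfinal : Nat.card ↥(Subgroup.normalizer (H : Set SL(2, F))) = (A ∪ B).ncard := by
    rw [← Nat.card_coe_set_eq, ← hNAB]
    rfl
  rw [hfinal, Set.ncard_union_eq hdisj (Set.toFinite A) (Set.toFinite B), hBim,
    Set.ncard_image_of_injective _ (mul_right_injective (a := τ)),
    ← Nat.card_coe_set_eq, hcardA, hq]
  ring
end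

section
/- Assume q ≡ 5 (mod 8) and let H be a subgroup of SL₂(F) of order 4. Then the normalizer of H in SL₂(F) has cardinality 2(q−1). -/
open Matrix
open scoped MatrixGroups

namespace SL2NormAux

variable {F : Type*} [Field F] [Fintype F]

/-- generic: elements of `zpowers x` when `x ^ 4 = 1`. -/
lemma mem_zpowers_four {G : Type*} [Group G] {x y : G} (hx : x ^ 4 = 1)
    (hy : y ∈ Subgroup.zpowers x) : y = 1 ∨ y = x ∨ y = x ^ 2 ∨ y = x ^ 3 := by
  obtain ⟨k, hk⟩ := hy
  have hy' : y = x ^ k := hk.symm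
  subst hy'
  have hmod : x ^ k = x ^ (k % 4) := by
    conv_lhs => rw [← Int.emod_add_mul_ediv k 4]
    rw [_root_.zpow_add, _root_.zpow_mul]
    rw [show ((4 : ℤ) = ((4 : ℕ) : ℤ)) from rfl, zpow_natCast, hx, _root_.one_zpow, mul_one]
  have h0 : 0 ≤ k % 4 := Int.emod_nonneg k (by norm_num)
  have h4 : k % 4 < 4 := Int.emod_lt_of_pos k (by norm_num)
  have hc : k % 4 = 0 ∨ k % 4 = 1 ∨ k % 4 = 2 ∨ k % 4 = 3 := by omega
  rcases hc with h | h | h | h <;> rw [hmod, h]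
  · left; exact zpow_zero x
  · right; left; exact zpow_one x
  · right; right; left
    rw [show ((2 : ℤ) = ((2 : ℕ) : ℤ)) from rfl, zpow_natCast]
  · right; right; right
    rw [show ((3 : ℤ) = ((3 : ℕ) : ℤ)) from rfl, zpow_natCast]

lemma conj_zpow_eq {G : Type*} [Group G] (g x : G) (k : ℤ) :
    g * x ^ k * g⁻¹ = (g * x * g⁻¹) ^ k := by
  simpa [MulAut.conj_apply] using (map_zpow (MulAut.conj g) x k).symm

lemma mem_normalizer_zpowers {G : Type*} [Group G] {g x : G}
    (h1 : g * x * g⁻¹ ∈ Subgroup.zpowers x) (h2 : g⁻¹ * x * g ∈ Subgroup.zpowers x) :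
    g ∈ Subgroup.normalizer (Subgroup.zpowers x : Set G) := by
  rw [Subgroup.mem_normalizer_iff]
  intro n
  constructor
  · rintro ⟨k, hk⟩
    have hn : n = x ^ k := hk.symm
    subst hn
    rw [conj_zpow_eq]
    exact Subgroup.zpow_mem _ h1 k
  · intro hn
    obtain ⟨k, hk⟩ := hn
    have hk' : x ^ k = g * n * g⁻¹ := hk
    have hn' : n = g⁻¹ * x ^ k * g := by rw [hk']; group
    rw [hn']
    have h3 : g⁻¹ * x ^ k * g = (g⁻¹ * x * g) ^ k := by
      have := conj_zpow_eq g⁻¹ x k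
      simpa using this
    rw [h3]
    exact Subgroup.zpow_mem _ h2 k

section WithI

variable (i : F)

lemma det_mD (hi : i * i = -1) : det !![i, 0; 0, -i] = 1 := by
  rw [det_fin_two_of]; linear_combination -hi

/-- the diagonal element of order 4 -/
def Dsl (hi : i * i = -1) : SL(2, F) := ⟨!![i, 0; 0, -i], det_mD i hi⟩

lemma i_ne_zero (hi : i * i = -1) (h2 : (2 : F) ≠ 0) : i ≠ 0 := by
  intro h
  apply h2
  have h1 : (-1 : F) = 0 := by rw [← hi, h, mul_zero]
  linear_combination -2 * h1

lemma Dsl_coe (hi : i * i = -1) : (Dsl i hi).1 = !![i, 0; 0, -i] := rfl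

lemma Dsl_sq (hi : i * i = -1) :
    (Dsl i hi) * (Dsl i hi) = ⟨!![-1, 0; 0, -1], by simp [det_fin_two_of]⟩ := by
  ext a b
  rw [Matrix.SpecialLinearGroup.coe_mul]; simp only [Dsl]
  fin_cases a <;> fin_cases b <;>
    simp [Matrix.mul_apply, Fin.sum_univ_two] <;> linear_combination hi

lemma Dsl_pow_four (hi : i * i = -1) : (Dsl i hi) ^ 4 = 1 := by
  have h := Dsl_sq i hi
  have h4 : (Dsl i hi) ^ 4 = ((Dsl i hi) * (Dsl i hi)) * ((Dsl i hi) * (Dsl i hi)) := by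
    rw [pow_succ, pow_succ, pow_succ, pow_one, mul_assoc]
  rw [h4, h]
  ext a b
  change (((!![-1, 0; 0, -1] : Matrix (Fin 2) (Fin 2) F) * !![-1, 0; 0, -1] : Matrix (Fin 2) (Fin 2) F)) a b = (1 : Matrix (Fin 2) (Fin 2) F) a b
  fin_cases a <;> fin_cases b <;>
    simp [Matrix.mul_apply, Fin.sum_univ_two, Matrix.SpecialLinearGroup.coe_one]

lemma Dsl_cube (hi : i * i = -1) : ((Dsl i hi) ^ 3).1 = !![-i, 0; 0, i] := by
  have h3 : (Dsl i hi) ^ 3 = ((Dsl i hi) * (Dsl i hi)) * (Dsl i hi) := by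
    rw [pow_succ, pow_succ, pow_one]
  rw [h3, Dsl_sq i hi]
  ext a b
  change ((!![-1, 0; 0, -1] : Matrix (Fin 2) (Fin 2) F) * !![i, 0; 0, -i]) a b = _
  fin_cases a <;> fin_cases b <;> simp [Matrix.mul_apply, Fin.sum_univ_two]

lemma Dsl_sq_coe (hi : i * i = -1) :
    ((Dsl i hi) ^ 2).1 = !![(-1 : F), 0; 0, -1] := by
  rw [pow_two, Dsl_sq i hi]

/-- membership in the normalizer of `⟨D⟩` -/
lemma mem_normalizer_iff_entries (hi : i * i = -1) (h2 : (2 : F) ≠ 0) (g : SL(2, F)) :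
    g ∈ Subgroup.normalizer (Subgroup.zpowers (Dsl i hi) : Set SL(2, F)) ↔
      (g.1 0 1 = 0 ∧ g.1 1 0 = 0) ∨ (g.1 0 0 = 0 ∧ g.1 1 1 = 0) := by
  have hi0 := i_ne_zero i hi h2
  constructor
  · intro hg
    have h1 : g * (Dsl i hi) * g⁻¹ ∈ Subgroup.zpowers (Dsl i hi) :=
      (Subgroup.mem_normalizer_iff.mp hg (Dsl i hi)).mp (Subgroup.mem_zpowers _)
    rcases mem_zpowers_four (Dsl_pow_four i hi) h1 with h | h | h | h
    · -- impossible : D = 1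
      exfalso
      have hD1 : (Dsl i hi) = 1 := by
        have := congrArg (fun z => g⁻¹ * z * g) h
        simpa [mul_assoc] using this
      have := congrArg (fun M => M.1 0 0) hD1
      simp [Dsl_coe, Matrix.SpecialLinearGroup.coe_one] at this
      -- this : i = 1
      apply h2
      linear_combination hi - (i + 1) * this
    · -- D case : g commutes with D
      left
      have hcomm : g * (Dsl i hi) = (Dsl i hi) * g := by
        have := congrArg (fun z => z * g) h
        simpa [mul_assoc] using this
      have hm : g.1 * (Dsl i hi).1 = (Dsl i hi).1 * g.1 := by
        have := congrArg (fun z => z.1) hcomm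
        simpa [Matrix.SpecialLinearGroup.coe_mul] using this
      constructor
      · have h01 := congrFun (congrFun hm 0) 1
        simp [Dsl_coe, Matrix.mul_apply, Fin.sum_univ_two] at h01
        -- h01 : g 0 1 * -i = i * g 0 1
        have : (2 : F) * i * g.1 0 1 = 0 := by linear_combination -h01
        have h2i : (2 : F) * i ≠ 0 := mul_ne_zero h2 hi0
        rcases mul_eq_zero.mp this with h' | h'
        · exact absurd h' h2i
        · exact h'
      · have h10 := congrFun (congrFun hm 1) 0
        simp [Dsl_coe, Matrix.mul_apply, Fin.sum_univ_two] at h10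
        have : (2 : F) * i * g.1 1 0 = 0 := by linear_combination h10
        have h2i : (2 : F) * i ≠ 0 := mul_ne_zero h2 hi0
        rcases mul_eq_zero.mp this with h' | h'
        · exact absurd h' h2i
        · exact h'
    · -- impossible : conj to D^2  (would give D^2 = 1)
      exfalso
      have hconj : g * ((Dsl i hi) * (Dsl i hi)) * g⁻¹ = 1 := by
        have e : g * ((Dsl i hi) * (Dsl i hi)) * g⁻¹
            = (g * (Dsl i hi) * g⁻¹) * (g * (Dsl i hi) * g⁻¹) := by group
        rw [e, h, ← pow_add]
        norm_num
        exact Dsl_pow_four i hi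
      have hsq : (Dsl i hi) * (Dsl i hi) = 1 := by
        have := congrArg (fun z => g⁻¹ * z * g) hconj
        simpa [mul_assoc] using this
      have e1 : ((Dsl i hi) * (Dsl i hi)).1 0 0 = 1 := by rw [hsq]; simp
      have e2 : ((Dsl i hi) * (Dsl i hi)).1 0 0 = -1 := by rw [Dsl_sq i hi]; simp
      apply h2
      rw [e1] at e2
      linear_combination e2
    · -- D^3 case : antidiagonal
      right
      have hcomm : g * (Dsl i hi) = (Dsl i hi) ^ 3 * g := by
        have := congrArg (fun z => z * g) h
        simpa [mul_assoc] using this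
      have hm : g.1 * (Dsl i hi).1 = ((Dsl i hi) ^ 3).1 * g.1 := by
        have := congrArg (fun z => z.1) hcomm
        simpa [Matrix.SpecialLinearGroup.coe_mul] using this
      rw [Dsl_cube] at hm
      constructor
      · have h00 := congrFun (congrFun hm 0) 0
        simp [Dsl_coe, Matrix.mul_apply, Fin.sum_univ_two] at h00
        have : (2 : F) * i * g.1 0 0 = 0 := by linear_combination h00
        have h2i : (2 : F) * i ≠ 0 := mul_ne_zero h2 hi0
        rcases mul_eq_zero.mp this with h' | h'
        · exact absurd h' h2i
        · exact h'
      · have h11 := congrFun (congrFun hm 1) 1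
        simp [Dsl_coe, Matrix.mul_apply, Fin.sum_univ_two] at h11
        have : (2 : F) * i * g.1 1 1 = 0 := by linear_combination -h11
        have h2i : (2 : F) * i ≠ 0 := mul_ne_zero h2 hi0
        rcases mul_eq_zero.mp this with h' | h'
        · exact absurd h' h2i
        · exact h'
  · rintro (⟨hb, hc⟩ | ⟨ha, hd⟩)
    · -- diagonal : commutes with D
      have hm : g.1 * (Dsl i hi).1 = (Dsl i hi).1 * g.1 := by
        ext a b
        fin_cases a <;> fin_cases b <;>
          simp [Dsl_coe, Matrix.mul_apply, Fin.sum_univ_two, hb, hc] <;> ring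
      have hcomm : g * (Dsl i hi) = (Dsl i hi) * g := by
        ext a b
        simp only [Matrix.SpecialLinearGroup.coe_mul]
        rw [hm]
      apply mem_normalizer_zpowers
      · have : g * (Dsl i hi) * g⁻¹ = Dsl i hi := by rw [hcomm, mul_assoc, mul_inv_cancel, mul_one]
        rw [this]; exact Subgroup.mem_zpowers _
      · have : g⁻¹ * (Dsl i hi) * g = Dsl i hi := by
          rw [mul_assoc, ← hcomm, ← mul_assoc, inv_mul_cancel, one_mul]
        rw [this]; exact Subgroup.mem_zpowers _
    · -- antidiagonal : conjugates D to D³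
      have hm : g.1 * (Dsl i hi).1 = ((Dsl i hi) ^ 3).1 * g.1 := by
        rw [Dsl_cube]
        ext a b
        fin_cases a <;> fin_cases b <;>
          simp [Dsl_coe, Matrix.mul_apply, Fin.sum_univ_two, ha, hd] <;> ring
      have hm' : (Dsl i hi).1 * g.1 = g.1 * ((Dsl i hi) ^ 3).1 := by
        rw [Dsl_cube]
        ext a b
        fin_cases a <;> fin_cases b <;>
          simp [Dsl_coe, Matrix.mul_apply, Fin.sum_univ_two, ha, hd] <;> ring
      have hcomm : g * (Dsl i hi) = (Dsl i hi) ^ 3 * g := by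
        ext a b; simp only [Matrix.SpecialLinearGroup.coe_mul]; rw [hm]
      have hcomm' : (Dsl i hi) * g = g * (Dsl i hi) ^ 3 := by
        ext a b; simp only [Matrix.SpecialLinearGroup.coe_mul]; rw [hm']
      apply mem_normalizer_zpowers
      · have : g * (Dsl i hi) * g⁻¹ = (Dsl i hi) ^ 3 := by
          rw [hcomm, mul_assoc, mul_inv_cancel, mul_one]
        rw [this]; exact Subgroup.zpow_mem _ (Subgroup.mem_zpowers _) 3
      · have : g⁻¹ * (Dsl i hi) * g = (Dsl i hi) ^ 3 := by
          rw [mul_assoc, hcomm', ← mul_assoc, inv_mul_cancel, one_mul]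
        rw [this]; exact Subgroup.zpow_mem _ (Subgroup.mem_zpowers _) 3

/-- the diagonal elements of the normalizer -/
def dEl (a : Fˣ) : SL(2, F) :=
  ⟨!![(a : F), 0; 0, ((a⁻¹ : Fˣ) : F)], by
    rw [det_fin_two_of]; simp⟩

/-- the antidiagonal elements of the normalizer -/
def aEl (b : Fˣ) : SL(2, F) :=
  ⟨!![0, (b : F); -((b⁻¹ : Fˣ) : F), 0], by
    rw [det_fin_two_of]; simp⟩

lemma card_normalizer_Dsl (hi : i * i = -1) (h2 : (2 : F) ≠ 0) :
    Nat.card (Subgroup.normalizer (Subgroup.zpowers (Dsl i hi) : Set SL(2, F))) = 2 * (Fintype.card F - 1) := by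
  classical
  set N := Subgroup.normalizer (Subgroup.zpowers (Dsl i hi) : Set SL(2, F)) with hN
  have memN : ∀ g : SL(2, F), g ∈ N ↔
      (g.1 0 1 = 0 ∧ g.1 1 0 = 0) ∨ (g.1 0 0 = 0 ∧ g.1 1 1 = 0) :=
    fun g => mem_normalizer_iff_entries i hi h2 g
  let f : Fˣ ⊕ Fˣ → N := fun s =>
    Sum.rec (fun a => ⟨dEl a, (memN _).mpr (Or.inl (by simp [dEl]))⟩)
      (fun b => ⟨aEl b, (memN _).mpr (Or.inr (by simp [aEl]))⟩) s
  have hinj : Function.Injective f := by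
    rintro (a | a) (b | b) h
    · have h' := congrArg (fun z : N => (z : SL(2, F)).1) h
      simp only [f, dEl, aEl] at h'
      have h00 := congrFun (congrFun h' 0) 0
      simp at h00
      exact congrArg Sum.inl (Units.ext h00)
    · have h' := congrArg (fun z : N => (z : SL(2, F)).1) h
      simp only [f, dEl, aEl] at h'
      have h00 := congrFun (congrFun h' 0) 0
      simp at h00
    · have h' := congrArg (fun z : N => (z : SL(2, F)).1) h
      simp only [f, dEl, aEl] at h'
      have h00 := congrFun (congrFun h' 0) 0
      simp at h00
      exact absurd h00.symm b.ne_zero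
    · have h' := congrArg (fun z : N => (z : SL(2, F)).1) h
      simp only [f, dEl, aEl] at h'
      have h01 := congrFun (congrFun h' 0) 1
      simp at h01
      exact congrArg Sum.inr (Units.ext h01)
  have hsurj : Function.Surjective f := by
    rintro ⟨g, hg⟩
    have hdet : g.1 0 0 * g.1 1 1 - g.1 0 1 * g.1 1 0 = 1 := by
      have := g.2
      rwa [Matrix.det_fin_two] at this
    rcases (memN g).mp hg with ⟨hb, hc⟩ | ⟨ha, hd⟩
    · have hd1 : g.1 0 0 * g.1 1 1 = 1 := by rw [hb, hc] at hdet; linear_combination hdet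
      have hd2 : g.1 1 1 * g.1 0 0 = 1 := by rw [mul_comm]; exact hd1
      refine ⟨Sum.inl (Units.mk (g.1 0 0) (g.1 1 1) hd1 hd2), ?_⟩
      apply Subtype.ext
      apply Subtype.ext
      show (dEl _).1 = g.1
      rw [dEl]
      ext a b
      fin_cases a <;> fin_cases b
      · simp
      · simpa using hb.symm
      · simpa using hc.symm
      · simp [Units.inv_mk]
    · have hd1 : g.1 0 1 * (-g.1 1 0) = 1 := by rw [ha, hd] at hdet; linear_combination hdet
      have hd2 : (-g.1 1 0) * g.1 0 1 = 1 := by rw [mul_comm]; exact hd1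
      refine ⟨Sum.inr (Units.mk (g.1 0 1) (-g.1 1 0) hd1 hd2), ?_⟩
      apply Subtype.ext
      apply Subtype.ext
      show (aEl _).1 = g.1
      rw [aEl]
      ext a b
      fin_cases a <;> fin_cases b
      · simpa using ha.symm
      · simp
      · simp [Units.inv_mk]
      · simpa using hd.symm
  have hcard := Nat.card_eq_of_bijective f ⟨hinj, hsurj⟩
  rw [← hcard, Nat.card_sum, Nat.card_units, Nat.card_eq_fintype_card]
  ring

lemma sq_entries (x : SL(2, F)) (hx : x.1 * x.1 = !![-1, 0; 0, -1]) :
    (x.1 0 0 * x.1 0 0 + x.1 0 1 * x.1 1 0 = -1) ∧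
      (x.1 1 1 = - x.1 0 0) := by
  have e00 := congrFun (congrFun hx 0) 0
  have e11 := congrFun (congrFun hx 1) 1
  simp [Matrix.mul_apply, Fin.sum_univ_two] at e00 e11
  have hdet : x.1 0 0 * x.1 1 1 - x.1 0 1 * x.1 1 0 = 1 := by
    have := x.2; rwa [Matrix.det_fin_two] at this
  refine ⟨e00, ?_⟩
  have key : (x.1 0 0 + x.1 1 1) * (x.1 0 0 + x.1 1 1) = 0 := by
    linear_combination e00 + e11 + 2 * hdet
  have := mul_self_eq_zero.mp key
  linear_combination this

/-- any `x` with `x² = -1` and nonzero upper-right entry is conjugate to `D` -/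
lemma conj_to_Dsl_of_ne (hi : i * i = -1) (h2 : (2 : F) ≠ 0) (x : SL(2, F))
    (hx : x.1 * x.1 = !![-1, 0; 0, -1]) (hb : x.1 0 1 ≠ 0) :
    ∃ g : SL(2, F), g * x * g⁻¹ = Dsl i hi := by
  obtain ⟨e00, hd⟩ := sq_entries x hx
  have hi0 := i_ne_zero i hi h2
  have hu : (-(2 * x.1 0 1 * i)) ≠ 0 := by
    simp only [neg_ne_zero]
    exact mul_ne_zero (mul_ne_zero h2 hb) hi0
  have hdet0 : det !![x.1 0 1 * (-(2 * x.1 0 1 * i))⁻¹, x.1 0 1;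
      (i - x.1 0 0) * (-(2 * x.1 0 1 * i))⁻¹, -i - x.1 0 0] = 1 := by
    rw [det_fin_two_of]
    field_simp
    ring
  set P : SL(2, F) := ⟨!![x.1 0 1 * (-(2 * x.1 0 1 * i))⁻¹, x.1 0 1;
      (i - x.1 0 0) * (-(2 * x.1 0 1 * i))⁻¹, -i - x.1 0 0], hdet0⟩ with hPdef
  have hkey : x * P = P * (Dsl i hi) := by
    apply Subtype.ext
    show x.1 * P.1 = P.1 * (Dsl i hi).1
    rw [hPdef, Dsl_coe]
    ext j k
    fin_cases j <;> fin_cases k <;>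
      simp [Matrix.mul_apply, Fin.sum_univ_two]
    · ring
    · ring
    · linear_combination (-(2 * x.1 0 1 * i)⁻¹) * e00 +
        ((i - x.1 0 0) * (-(2 * x.1 0 1 * i)⁻¹)) * hd - (-(2 * x.1 0 1 * i)⁻¹) * hi
    · linear_combination e00 - (i + x.1 0 0) * hd - hi
  refine ⟨P⁻¹, ?_⟩
  rw [inv_inv, mul_assoc, hkey, ← mul_assoc, inv_mul_cancel, one_mul]

/-- the Weyl element -/
def wEl : SL(2, F) := ⟨!![0, 1; -1, 0], by rw [det_fin_two_of]; ring⟩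

lemma wEl_inv_coe : ((wEl (F := F))⁻¹).1 = !![0, -1; 1, 0] := by
  have h1 : (wEl (F := F)) * ⟨!![0, -1; 1, 0], by rw [det_fin_two_of]; ring⟩ = 1 := by
    apply Subtype.ext
    show (wEl (F := F)).1 * _ = _
    ext j k
    fin_cases j <;> fin_cases k <;>
      simp [wEl, Matrix.mul_apply, Fin.sum_univ_two, Matrix.SpecialLinearGroup.coe_one]
  rw [inv_eq_of_mul_eq_one_right h1]

lemma conj_wEl_coe (x : SL(2, F)) :
    ((wEl) * x * (wEl)⁻¹).1 = !![x.1 1 1, -x.1 1 0; -x.1 0 1, x.1 0 0] := by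
  have : ((wEl) * x * (wEl)⁻¹).1 = (wEl (F := F)).1 * x.1 * ((wEl (F := F))⁻¹).1 := by
    simp [Matrix.SpecialLinearGroup.coe_mul]
  rw [this, wEl_inv_coe]
  ext j k
  fin_cases j <;> fin_cases k <;>
    simp [wEl, Matrix.mul_apply, Matrix.vecMul, dotProduct, Fin.sum_univ_two] <;> ring

lemma conj_wEl_sq (x : SL(2, F)) (hx : x.1 * x.1 = !![-1, 0; 0, -1]) :
    ((wEl) * x * (wEl)⁻¹).1 * ((wEl) * x * (wEl)⁻¹).1 = !![-1, 0; 0, -1] := by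
  rw [conj_wEl_coe]
  obtain ⟨e00, hd⟩ := sq_entries x hx
  rw [hd]
  ext j k
  fin_cases j <;> fin_cases k <;> simp [Matrix.mul_apply, Fin.sum_univ_two]
  all_goals first
    | ring1
    | linear_combination e00
    | linear_combination -e00
    | linear_combination (-1 : F) * e00

/-- any `x` with `x² = -1` is conjugate to `D` -/
lemma conj_to_Dsl (hi : i * i = -1) (h2 : (2 : F) ≠ 0) (x : SL(2, F))
    (hx : x.1 * x.1 = !![-1, 0; 0, -1]) :
    ∃ g : SL(2, F), g * x * g⁻¹ = Dsl i hi := by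
  have hi0 := i_ne_zero i hi h2
  obtain ⟨e00, hd⟩ := sq_entries x hx
  have hdet : x.1 0 0 * x.1 1 1 - x.1 0 1 * x.1 1 0 = 1 := by
    have := x.2; rwa [Matrix.det_fin_two] at this
  by_cases hb : x.1 0 1 ≠ 0
  · exact conj_to_Dsl_of_ne i hi h2 x hx hb
  push_neg at hb
  by_cases hc : x.1 1 0 ≠ 0
  · -- conjugate by w to move `c` to the upper-right corner
    have hx' := conj_wEl_sq x hx
    have hb' : ((wEl) * x * (wEl)⁻¹).1 0 1 ≠ 0 := by
      rw [conj_wEl_coe]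
      simpa using hc
    obtain ⟨g, hg⟩ := conj_to_Dsl_of_ne i hi h2 ((wEl) * x * (wEl)⁻¹) hx' hb'
    refine ⟨g * wEl, ?_⟩
    have e : (g * wEl) * x * (g * wEl)⁻¹ = g * ((wEl) * x * (wEl)⁻¹) * g⁻¹ := by
      group
    rw [e, hg]
  · -- diagonal case
    push_neg at hc
    have ha2 : x.1 0 0 * x.1 0 0 = -1 := by linear_combination e00 - x.1 1 0 * hb
    have hfac : (x.1 0 0 - i) * (x.1 0 0 + i) = 0 := by linear_combination ha2 - hi
    rcases mul_eq_zero.mp hfac with h' | h'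
    · -- a = i, so x = D
      have ha : x.1 0 0 = i := by linear_combination h'
      refine ⟨1, ?_⟩
      rw [one_mul, inv_one, mul_one]
      apply Subtype.ext
      rw [Dsl_coe]
      ext j k
      fin_cases j <;> fin_cases k
      · simpa using ha
      · simpa using hb
      · simpa using hc
      · show x.1 1 1 = -i
        rw [hd, ha]
    · -- a = -i, so x = D⁻¹ and w conjugates it to D
      have ha : x.1 0 0 = -i := by linear_combination h'
      refine ⟨wEl, ?_⟩
      apply Subtype.ext
      rw [conj_wEl_coe, Dsl_coe]
      ext j k
      fin_cases j <;> fin_cases k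
      · show x.1 1 1 = i
        rw [hd, ha, neg_neg]
      · simpa using hc
      · simpa using hb
      · show x.1 0 0 = -i
        exact ha

end WithI

lemma invol (h2 : (2 : F) ≠ 0) (z : SL(2, F)) (hz : z * z = 1) (hz1 : z ≠ 1) :
    z.1 = !![-1, 0; 0, -1] := by
  have hinv : z⁻¹ = z := inv_eq_of_mul_eq_one_right hz
  rw [Matrix.SpecialLinearGroup.SL2_inv_expl] at hinv
  have hm := congrArg (fun w : SL(2, F) => w.1) hinv
  simp only at hm
  have e00 := congrFun (congrFun hm 0) 0
  have e01 := congrFun (congrFun hm 0) 1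
  have e10 := congrFun (congrFun hm 1) 0
  simp only [Matrix.cons_val_zero, Matrix.cons_val_one, Matrix.head_cons] at e00 e01 e10
  -- e00 : z 1 1 = z 0 0, e01 : -z 0 1 = z 0 1, e10 : -z 1 0 = z 1 0
  have hb : z.1 0 1 = 0 := by
    have h2' : (2 : F) * z.1 0 1 = 0 := by linear_combination -e01
    rcases mul_eq_zero.mp h2' with h' | h'
    · exact absurd h' h2
    · exact h'
  have hc : z.1 1 0 = 0 := by
    have h2' : (2 : F) * z.1 1 0 = 0 := by linear_combination -e10
    rcases mul_eq_zero.mp h2' with h' | h'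
    · exact absurd h' h2
    · exact h'
  have hdet : z.1 0 0 * z.1 1 1 - z.1 0 1 * z.1 1 0 = 1 := by
    have := z.2; rwa [Matrix.det_fin_two] at this
  have ha2 : z.1 0 0 * z.1 0 0 = 1 := by
    rw [hb, hc] at hdet
    rw [← e00] at hdet ⊢
    · linear_combination hdet
  rcases mul_self_eq_one_iff.mp ha2 with h' | h'
  · exfalso
    apply hz1
    apply Subtype.ext
    ext j k
    fin_cases j <;> fin_cases k
    · simpa [Matrix.SpecialLinearGroup.coe_one] using h'
    · simpa [Matrix.SpecialLinearGroup.coe_one] using hb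
    · simpa [Matrix.SpecialLinearGroup.coe_one] using hc
    · show z.1 1 1 = (1 : SL(2, F)).1 1 1
      rw [e00, h']
      simp [Matrix.SpecialLinearGroup.coe_one]
  · ext j k
    fin_cases j <;> fin_cases k
    · simpa using h'
    · simpa using hb
    · simpa using hc
    · show z.1 1 1 = -1
      rw [e00, h']

end SL2NormAux

open SL2NormAux

/-- If `q ≡ 5 (mod 8)` and `H` is a subgroup of `SL(2, F)` of order `4`, then the
normalizer of `H` in `SL(2, F)` has cardinality `2 (q - 1)`. -/
theorem normalizer_order_four_card_q_sub_one
    (F : Type*) [Field F] [Fintype F] (q : ℕ) (hq : Fintype.card F = q)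
    (hmod : q % 8 = 5) (H : Subgroup SL(2, F)) (hH : Nat.card H = 4) :
    Nat.card (Subgroup.normalizer (H : Set SL(2, F))) = 2 * (q - 1) := by
  subst hq
  have h2 : (2 : F) ≠ 0 := by
    apply Ring.two_ne_zero
    intro hchar
    have := FiniteField.even_card_iff_char_two.mp hchar
    omega
  have hneg : IsSquare (-1 : F) := FiniteField.isSquare_neg_one_iff.mpr (by omega)
  obtain ⟨i, hi'⟩ := hneg
  have hi : i * i = -1 := hi'.symm
  haveI hfin : Finite ↥H := Nat.finite_of_card_ne_zero (by rw [hH]; norm_num)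
  -- `H` contains an element whose square is nontrivial
  have hex : ∃ h : ↥H, ¬ (h * h = 1) := by
    by_contra hall
    push_neg at hall
    have hsub : (H : Set SL(2, F)) ⊆
        {1, ⟨!![-1, 0; 0, -1], by rw [det_fin_two_of]; ring⟩} := by
      intro z hz
      by_cases hz1 : z = 1
      · exact Or.inl hz1
      · right
        have hz2 : z * z = 1 := congrArg Subtype.val (hall ⟨z, hz⟩)
        have := invol h2 z hz2 hz1
        exact Subtype.ext this
    have hle : Nat.card ↥H ≤ 2 := by
      have h1 := Set.ncard_le_ncard hsub (Set.toFinite _)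
      have h3 : Nat.card ↥H = (H : Set SL(2, F)).ncard := Nat.card_coe_set_eq _
      have h4 : ({1, (⟨!![-1, 0; 0, -1], by rw [det_fin_two_of]; ring⟩ : SL(2, F))} :
          Set SL(2, F)).ncard ≤ 2 := by
        apply le_trans (Set.ncard_insert_le _ _)
        simp
        exact Set.subsingleton_singleton
      omega
    rw [hH] at hle
    omega
  obtain ⟨h, hh⟩ := hex
  have hord4 : orderOf h = 4 := by
    have hdvd : orderOf h ∣ 4 := hH ▸ orderOf_dvd_natCard h
    have hle4 : orderOf h ≤ 4 := Nat.le_of_dvd (by norm_num) hdvd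
    have hpos : 0 < orderOf h := orderOf_pos h
    have hne1 : orderOf h ≠ 1 := by
      intro h1
      apply hh
      rw [orderOf_eq_one_iff.mp h1, one_mul]
    have hne2 : orderOf h ≠ 2 := by
      intro h1
      apply hh
      have := pow_orderOf_eq_one h
      rwa [h1, pow_two] at this
    interval_cases hcase : (orderOf h) <;> first
      | rfl
      | omega
      | (exfalso; rw [hcase] at hdvd; norm_num at hdvd)
  have hxH : (h : SL(2, F)) ∈ H := h.2
  have hordx : orderOf (h : SL(2, F)) = 4 := by
    rw [Subgroup.orderOf_coe, hord4]
  have hHx : Subgroup.zpowers (h : SL(2, F)) = H := by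
    apply Subgroup.eq_of_le_of_card_ge
    · rw [Subgroup.zpowers_le]; exact hxH
    · rw [hH, Nat.card_zpowers, hordx]
  have hx4 : (h : SL(2, F)) ^ 4 = 1 := by rw [← hordx]; exact pow_orderOf_eq_one _
  have hx2ne : (h : SL(2, F)) * (h : SL(2, F)) ≠ 1 := by
    intro hcon
    rw [← pow_two] at hcon
    have := orderOf_dvd_of_pow_eq_one hcon
    rw [hordx] at this
    norm_num at this
  have hx2sq : ((h : SL(2, F)) * (h : SL(2, F))) * ((h : SL(2, F)) * (h : SL(2, F))) = 1 := by
    rw [pow_succ, pow_succ, pow_succ, pow_one, mul_assoc] at hx4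
    exact hx4
  have hx2 : ((h : SL(2, F)) : Matrix (Fin 2) (Fin 2) F) *
      ((h : SL(2, F)) : Matrix (Fin 2) (Fin 2) F) = !![-1, 0; 0, -1] := by
    have := invol h2 ((h : SL(2, F)) * (h : SL(2, F))) hx2sq hx2ne
    rw [← this]
    rfl
  obtain ⟨γ, hγ⟩ := conj_to_Dsl i hi h2 (h : SL(2, F)) hx2
  have hmapH : Subgroup.map (MulAut.conj γ).toMonoidHom H = Subgroup.zpowers (Dsl i hi) := by
    rw [← hHx, MonoidHom.map_zpowers]
    have : (MulAut.conj γ).toMonoidHom (h : SL(2, F)) = Dsl i hi := by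
      rw [← hγ]
      rfl
    rw [this]
  have hnorm := Subgroup.map_equiv_normalizer_eq H (MulAut.conj γ)
  have hcardeq : Nat.card (Subgroup.normalizer (H : Set SL(2, F))) =
      Nat.card (Subgroup.map (MulAut.conj γ).toMonoidHom (Subgroup.normalizer (H : Set SL(2, F)))) :=
    Nat.card_congr
      (Subgroup.equivMapOfInjective _ _ ((MulAut.conj γ).toEquiv.injective)).toEquiv
  rw [hcardeq, hnorm, hmapH, card_normalizer_Dsl i hi h2]
end
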